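/- arXiv:1912.08690 — 10 statements merged into one kernel-verified Lean document; each statement's English description precedes it below -/
import Mathlib

section
/- For every infinite subset J of the open interval (0, 1/2), the set of geometric vectors {g_λ : λ ∈ J}, where g_λ = (λ^j)_{j<ω} ∈ ℓ₁, has dense linear span in ℓ₁. -/
open FormalMultilinearSeries Filter ENNReal NNReal

theorem stmt_1 (J : Set ℝ) (hJ : J ⊆ Set.Ioo (0 : ℝ) (1/2)) (hJinf : J.Infinite) :
    Dense (Submodule.span ℝ
      {f : lp (fun _ : ℕ => ℝ) 1 | ∃ l ∈ J, ∀ j : ℕ, f j = l ^ j} : Set (lp (fun _ : ℕ => ℝ) 1)) := by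
  haveI : Fact ((1:ℝ≥0∞) ≤ 1) := ⟨le_refl _⟩
  set S : Set (lp (fun _ : ℕ => ℝ) 1) := {f | ∃ l ∈ J, ∀ j : ℕ, f j = l ^ j} with hSdef
  -- membership of the geometric sequences in ℓ¹
  have hmem : ∀ l ∈ J, Memℓp (fun j : ℕ => l ^ j) 1 := by
    intro l hl
    obtain ⟨hl0, hl2⟩ := hJ hl
    apply memℓp_gen
    have : Summable (fun j : ℕ => l ^ j) :=
      summable_geometric_of_lt_one hl0.le (by linarith)
    refine this.congr fun j => ?_
    simp [abs_of_nonneg hl0.le]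
  -- key step: every continuous linear functional vanishing on S is zero
  have key : ∀ (φ : lp (fun _ : ℕ => ℝ) 1 →L[ℝ] ℝ), (∀ f ∈ S, φ f = 0) → φ = 0 := by
    intro φ hφ
    set a : ℕ → ℝ := fun n => φ (lp.single (E := fun _ : ℕ => ℝ) 1 n 1) with ha
    -- expansion of φ along the standard basis
    have hexp : ∀ f : lp (fun _ : ℕ => ℝ) 1,
        HasSum (fun i : ℕ => f i * a i) (φ f) := by
      intro f
      have h1 : HasSum (fun i : ℕ => lp.single 1 i (f i)) f :=
        lp.hasSum_single (by norm_num) f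
      have h2 := h1.mapL φ
      refine h2.congr_fun fun i => ?_
      have : lp.single (1 : ℝ≥0∞) i (f i) = (f i) • lp.single (E := fun _ : ℕ => ℝ) 1 i (1:ℝ) := by
        rw [← lp.single_smul]
        norm_num
      rw [this, map_smul, smul_eq_mul, ha]
    -- the power series with coefficients a
    set p : FormalMultilinearSeries ℝ ℝ ℝ := ofScalars ℝ a with hp
    have hnorm : ∀ n, ‖p n‖ = |a n| := fun n => by
      rw [hp, ofScalars_norm]; rfl
    have habd : ∀ n, |a n| ≤ ‖φ‖ := by
      intro n
      have := φ.le_opNorm (lp.single (E := fun _ : ℕ => ℝ) 1 n (1:ℝ))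
      have hns : ‖lp.single (E := fun _ : ℕ => ℝ) (1:ℝ≥0∞) n (1:ℝ)‖ = ‖(1:ℝ)‖ := by
        simpa using lp.norm_single (p := (1:ℝ≥0∞)) (by norm_num)
          (fun _ : ℕ => (1:ℝ)) n
      calc |a n| = ‖φ (lp.single (E := fun _ : ℕ => ℝ) 1 n (1:ℝ))‖ := rfl
        _ ≤ ‖φ‖ * ‖lp.single (E := fun _ : ℕ => ℝ) (1:ℝ≥0∞) n (1:ℝ)‖ := this
        _ = ‖φ‖ := by rw [hns]; simp
    have hrad : (1 : ℝ≥0∞) ≤ p.radius := by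
      refine p.le_radius_of_bound ‖φ‖ (r := 1) fun n => ?_
      rw [hnorm]
      simpa using habd n
    have hball : HasFPowerSeriesOnBall p.sum p 0 1 :=
      (p.hasFPowerSeriesOnBall (lt_of_lt_of_le zero_lt_one hrad)).mono zero_lt_one hrad
    -- p.sum vanishes on J
    have hsumJ : ∀ l ∈ J, p.sum l = 0 := by
      intro l hl
      set g : lp (fun _ : ℕ => ℝ) 1 := ⟨fun j => l ^ j, hmem l hl⟩ with hg
      have hg0 : φ g = 0 := hφ g ⟨l, hl, fun j => rfl⟩
      have h1 : HasSum (fun i : ℕ => l ^ i * a i) 0 := by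
        have := hexp g
        rwa [hg0] at this
      have : p.sum l = ∑' n, a n • l ^ n := ofScalars_sum_eq a l
      rw [this, ← h1.tsum_eq]
      exact tsum_congr fun n => by rw [smul_eq_mul, mul_comm]
    -- identity theorem
    obtain ⟨x₀, hx₀K, hacc⟩ :=
      hJinf.exists_accPt_of_subset_isCompact (isCompact_Icc (a := (0:ℝ)) (b := 1/2))
        (hJ.trans Set.Ioo_subset_Icc_self)
    have hUball : Metric.eball (0:ℝ) 1 = Metric.ball 0 1 := by
      rw [← ENNReal.coe_one, Metric.emetric_ball_nnreal]
      norm_num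
    have hx₀U : x₀ ∈ Metric.eball (0:ℝ) 1 := by
      rw [hUball, Real.ball_eq_Ioo]
      constructor <;> [linarith [hx₀K.1]; linarith [hx₀K.2]]
    have hfreq : ∃ᶠ z in nhdsWithin x₀ {x₀}ᶜ, p.sum z = 0 := by
      rw [frequently_nhdsWithin_iff]
      have := accPt_iff_frequently.1 hacc
      exact this.mono fun z hz => ⟨hsumJ z hz.2, hz.1⟩
    have hzero : Set.EqOn p.sum 0 (Metric.eball (0:ℝ) 1) := by
      refine AnalyticOnNhd.eqOn_zero_of_preconnected_of_frequently_eq_zero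
        hball.analyticOnNhd ?_ hx₀U hfreq
      rw [hUball]
      exact (convex_ball (0:ℝ) 1).isPreconnected
    have hpz : p = 0 := (hball.congr hzero).hasFPowerSeriesAt.eq_zero
    have haz : a = 0 := (ofScalars_series_eq_zero (E := ℝ)).1 hpz
    -- conclude φ = 0
    ext f
    have := hexp f
    rw [haz] at this
    simp only [Pi.zero_apply, mul_zero] at this
    have := this.unique hasSum_zero
    simpa using this
  -- Hahn-Banach separation argument
  by_contra h
  have hne : closure ((Submodule.span ℝ S : Submodule ℝ _) : Set (lp (fun _ : ℕ => ℝ) 1))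
      ≠ Set.univ := fun hc => h (dense_iff_closure_eq.2 hc)
  obtain ⟨x, hx⟩ : ∃ x, x ∉ closure ((Submodule.span ℝ S : Submodule ℝ _) :
      Set (lp (fun _ : ℕ => ℝ) 1)) := by
    by_contra hh
    push_neg at hh
    exact hne (Set.eq_univ_of_forall hh)
  obtain ⟨f, u, hfu, hux⟩ := geometric_hahn_banach_closed_point
    ((Submodule.span ℝ S).convex.closure) isClosed_closure hx
  have hvan : ∀ y ∈ Submodule.span ℝ S, f y = 0 := by
    intro y hy
    by_contra hfy
    have h1 : ∀ t : ℝ, t * f y < u := by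
      intro t
      have := hfu (t • y) (subset_closure (Submodule.smul_mem _ t hy))
      simpa using this
    have h2 := h1 ((u + 1) / f y)
    rw [div_mul_cancel₀ _ hfy] at h2
    linarith
  have hf0 : f = 0 := key f fun s hs => hvan s (Submodule.subset_span hs)
  have h0u : (0:ℝ) < u := by
    have := hfu 0 (subset_closure (Submodule.zero_mem _))
    simpa using this
  rw [hf0] at hux
  simp at hux
  linarith
end

section
/- Every separable Banach space contains an overcomplete sequence, i.e., a sequence all of whose subsequences are linearly dense. -/
open Filter Topology

/-- A sequence with geometrically decaying bound is summable. -/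
lemma summable_geom_bound {b : ℕ → ℝ} {C : ℝ} (h : ∀ i, |b i| ≤ C * (2⁻¹ : ℝ) ^ i) :
    Summable b := by
  refine Summable.of_norm_bounded
    ((summable_geometric_of_lt_one (r := (2⁻¹ : ℝ)) (by norm_num) (by norm_num)).mul_left C) ?_
  simpa [Real.norm_eq_abs] using h

/-- If every continuous linear functional vanishing on a submodule is zero, the submodule
is dense. -/
lemma dense_of_dual {X : Type*} [NormedAddCommGroup X] [NormedSpace ℝ X]
    (p : Submodule ℝ X) (h : ∀ f : X →L[ℝ] ℝ, (∀ y ∈ p, f y = 0) → f = 0) :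
    Dense (p : Set X) := by
  rw [dense_iff_closure_eq]
  by_contra hne
  obtain ⟨x, hx⟩ : ∃ x, x ∉ closure (p : Set X) := by
    by_contra h'
    push_neg at h'
    exact hne (Set.eq_univ_of_forall h')
  obtain ⟨l, u, hl, hu⟩ :=
    geometric_hahn_banach_closed_point (p.convex.closure) isClosed_closure hx
  have hu0 : 0 < u := by
    have := hl 0 (subset_closure p.zero_mem)
    simpa using this
  have hvan : ∀ y ∈ p, l y = 0 := by
    intro y hy
    by_contra hly
    have hmem : ((|u| + 1) / l y) • y ∈ p := p.smul_mem _ hy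
    have h2 := hl _ (subset_closure hmem)
    rw [map_smul, smul_eq_mul, div_mul_cancel₀ _ hly] at h2
    have := le_abs_self u
    linarith
  have hl0 := h l hvan
  rw [hl0] at hu
  simp only [ContinuousLinearMap.zero_apply] at hu
  linarith

theorem stmt_3 {X : Type*} [NormedAddCommGroup X] [NormedSpace ℝ X] [CompleteSpace X]
    [TopologicalSpace.SeparableSpace X] :
    ∃ x : ℕ → X, ∀ M : Set ℕ, M.Infinite → Dense (Submodule.span ℝ (x '' M) : Set X) := by
  have : Nonempty X := ⟨0⟩
  obtain ⟨d, hd⟩ := TopologicalSpace.exists_dense_seq X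
  set c : ℕ → X := fun k => ((2 : ℝ) ^ k * (1 + ‖d k‖))⁻¹ • d k with hc
  have hck : ∀ k, ‖c k‖ ≤ (2⁻¹ : ℝ) ^ k := by
    intro k
    have h1 : (0 : ℝ) < 2 ^ k * (1 + ‖d k‖) := by positivity
    rw [hc, norm_smul, Real.norm_eq_abs, abs_inv, abs_of_pos h1]
    calc (2 ^ k * (1 + ‖d k‖))⁻¹ * ‖d k‖
        ≤ (2 ^ k * (1 + ‖d k‖))⁻¹ * (1 + ‖d k‖) :=
          mul_le_mul_of_nonneg_left (by linarith [norm_nonneg (d k)]) (by positivity)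
      _ = ((2 : ℝ) ^ k)⁻¹ := by
          rw [mul_inv, mul_assoc, inv_mul_cancel₀ (by positivity), mul_one]
      _ = (2⁻¹ : ℝ) ^ k := by rw [inv_pow]
  -- summability of the defining series
  have hsum : ∀ s : ℝ, 0 ≤ s → s ≤ 2⁻¹ → Summable (fun k => s ^ (k + 1) • c k) := by
    intro s hs0 hs
    refine Summable.of_norm_bounded
      (summable_geometric_of_lt_one (r := (2⁻¹ : ℝ)) (by norm_num) (by norm_num)) ?_
    intro k
    rw [norm_smul, Real.norm_eq_abs, abs_of_nonneg (by positivity)]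
    have h1 : s ^ (k + 1) ≤ 1 := by
      calc s ^ (k + 1) ≤ (2⁻¹ : ℝ) ^ (k + 1) := by gcongr
        _ ≤ 1 := by apply pow_le_one₀ <;> norm_num
    calc s ^ (k + 1) * ‖c k‖ ≤ 1 * (2⁻¹ : ℝ) ^ k :=
          mul_le_mul h1 (hck k) (norm_nonneg _) zero_le_one
      _ = (2⁻¹ : ℝ) ^ k := one_mul _
  set x : ℕ → X := fun n => ∑' k, (((n : ℝ) + 2)⁻¹) ^ (k + 1) • c k with hxdef
  have hts : ∀ n : ℕ, 0 < ((n : ℝ) + 2)⁻¹ ∧ ((n : ℝ) + 2)⁻¹ ≤ 2⁻¹ := by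
    intro n
    constructor
    · positivity
    · exact inv_anti₀ (by norm_num) (by linarith [Nat.cast_nonneg (α := ℝ) n])
  refine ⟨x, ?_⟩
  intro M hM
  apply dense_of_dual
  intro f hf
  have ha : ∀ k, |f (c k)| ≤ ‖f‖ * (2⁻¹ : ℝ) ^ k := by
    intro k
    calc |f (c k)| = ‖f (c k)‖ := rfl
      _ ≤ ‖f‖ * ‖c k‖ := f.le_opNorm _
      _ ≤ ‖f‖ * (2⁻¹ : ℝ) ^ k := mul_le_mul_of_nonneg_left (hck k) (norm_nonneg f)
  -- the functional vanishes on each x n, n ∈ M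
  have key : ∀ n ∈ M, ∑' k, f (c k) * (((n : ℝ) + 2)⁻¹) ^ (k + 1) = 0 := by
    intro n hn
    have h0 : f (x n) = 0 := hf (x n) (Submodule.subset_span ⟨n, hn, rfl⟩)
    have h1 : f (x n) = ∑' k, f (c k) * (((n : ℝ) + 2)⁻¹) ^ (k + 1) := by
      rw [hxdef]
      rw [f.map_tsum (hsum _ (hts n).1.le (hts n).2)]
      refine tsum_congr fun k => ?_
      rw [f.map_smul, smul_eq_mul, mul_comm]
    rw [← h1, h0]
  -- all coefficients vanish
  have hzero : ∀ m, f (c m) = 0 := by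
    intro m
    induction m using Nat.strong_induction_on with
    | _ m ih =>
      have bound : ∀ n ∈ M, |f (c m)| ≤ 2 * ‖f‖ * ((n : ℝ) + 2)⁻¹ := by
        intro n hn
        set s : ℝ := ((n : ℝ) + 2)⁻¹ with hs
        obtain ⟨hs0, hs2⟩ := hts n
        have hsummable : Summable (fun k => f (c k) * s ^ (k + 1)) := by
          refine summable_geom_bound (C := ‖f‖) fun i => ?_
          rw [abs_mul]
          have h1 : |s ^ (i + 1)| ≤ 1 := by
            rw [abs_of_nonneg (by positivity)]
            calc s ^ (i + 1) ≤ (2⁻¹ : ℝ) ^ (i + 1) := by gcongr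
              _ ≤ 1 := by apply pow_le_one₀ <;> norm_num
          calc |f (c i)| * |s ^ (i + 1)| ≤ (‖f‖ * (2⁻¹ : ℝ) ^ i) * 1 :=
                mul_le_mul (ha i) h1 (abs_nonneg _) (by positivity)
            _ = ‖f‖ * (2⁻¹ : ℝ) ^ i := mul_one _
        have heq0 : ∑' k, f (c k) * s ^ (k + 1) = 0 := key n hn
        have hsplit := Summable.sum_add_tsum_nat_add (f := fun k => f (c k) * s ^ (k + 1)) m hsummable
        have hfin : ∑ i ∈ Finset.range m, f (c i) * s ^ (i + 1) = 0 :=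
          Finset.sum_eq_zero fun i hi => by
            rw [ih i (Finset.mem_range.mp hi), zero_mul]
        rw [hfin, zero_add, heq0] at hsplit
        -- hsplit : ∑' i, f (c (i + m)) * s ^ (i + m + 1) = 0
        have hfac : ∀ i : ℕ, f (c (i + m)) * s ^ (i + m + 1)
            = s ^ (m + 1) * (f (c (i + m)) * s ^ i) := by
          intro i
          rw [show i + m + 1 = (m + 1) + i by omega, pow_add]
          ring
        rw [tsum_congr hfac, tsum_mul_left] at hsplit
        have hT : ∑' i, f (c (i + m)) * s ^ i = 0 := by
          rcases mul_eq_zero.mp hsplit with h | h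
          · exact absurd h (by positivity)
          · exact h
        have hTsummable : Summable (fun i => f (c (i + m)) * s ^ i) := by
          refine summable_geom_bound (C := ‖f‖) fun i => ?_
          rw [abs_mul]
          have h1 : |f (c (i + m))| ≤ ‖f‖ * 1 := by
            refine (ha (i + m)).trans ?_
            exact mul_le_mul_of_nonneg_left (by apply pow_le_one₀ <;> norm_num)
              (norm_nonneg f)
          have h2 : |s ^ i| ≤ (2⁻¹ : ℝ) ^ i := by
            rw [abs_of_nonneg (by positivity)]; gcongr
          calc |f (c (i + m))| * |s ^ i| ≤ (‖f‖ * 1) * (2⁻¹ : ℝ) ^ i :=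
                mul_le_mul h1 h2 (abs_nonneg _) (by positivity)
            _ = ‖f‖ * (2⁻¹ : ℝ) ^ i := by ring
        rw [Summable.tsum_eq_zero_add hTsummable] at hT
        simp only [zero_add, pow_zero, mul_one] at hT
        have hm : f (c m) = -∑' i, f (c (i + 1 + m)) * s ^ (i + 1) := by linarith
        have hgeo : HasSum (fun i : ℕ => (‖f‖ * s) * (2⁻¹ : ℝ) ^ i) ((‖f‖ * s) * 2) := by
          have h2 := (hasSum_geometric_of_lt_one (r := (2⁻¹ : ℝ)) (by norm_num)
            (by norm_num)).mul_left (‖f‖ * s)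
          norm_num at h2 ⊢
          exact h2
        have habs : ‖∑' i, f (c (i + 1 + m)) * s ^ (i + 1)‖ ≤ ‖f‖ * s * 2 := by
          refine tsum_of_norm_bounded hgeo fun i => ?_
          rw [Real.norm_eq_abs, abs_mul]
          calc |f (c (i + 1 + m))| * |s ^ (i + 1)|
              ≤ (‖f‖ * 1) * (s * (2⁻¹ : ℝ) ^ i) := by
                have hb1 : |f (c (i + 1 + m))| ≤ ‖f‖ * 1 := by
                  refine (ha (i + 1 + m)).trans ?_
                  exact mul_le_mul_of_nonneg_left (by apply pow_le_one₀ <;> norm_num)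
                    (norm_nonneg f)
                have hb2 : |s ^ (i + 1)| ≤ s * (2⁻¹ : ℝ) ^ i := by
                  rw [abs_of_nonneg (by positivity), pow_succ, mul_comm]
                  gcongr
                exact mul_le_mul hb1 hb2 (abs_nonneg _) (by positivity)
            _ = (‖f‖ * s) * (2⁻¹ : ℝ) ^ i := by ring
        calc |f (c m)| = ‖∑' i, f (c (i + 1 + m)) * s ^ (i + 1)‖ := by
              rw [hm, abs_neg, Real.norm_eq_abs]
          _ ≤ ‖f‖ * s * 2 := habs
          _ = 2 * ‖f‖ * s := by ring
      have htend : Tendsto (fun N : ℕ => 2 * ‖f‖ * ((N : ℝ) + 2)⁻¹) atTop (𝓝 0) := by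
        have h1 : Tendsto (fun N : ℕ => ((N : ℝ) + 2)) atTop atTop :=
          tendsto_atTop_add_const_right _ 2 tendsto_natCast_atTop_atTop
        have h2 := (h1.inv_tendsto_atTop).const_mul (2 * ‖f‖)
        simpa using h2
      have hle : ∀ N : ℕ, |f (c m)| ≤ 2 * ‖f‖ * ((N : ℝ) + 2)⁻¹ := by
        intro N
        obtain ⟨n, hnM, hn⟩ := hM.exists_gt N
        refine (bound n hnM).trans ?_
        refine mul_le_mul_of_nonneg_left (inv_anti₀ (by positivity) ?_) (by positivity)
        have : (N : ℝ) ≤ (n : ℝ) := by exact_mod_cast hn.le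
        linarith
      have h0 := ge_of_tendsto' htend hle
      exact abs_eq_zero.mp (le_antisymm h0 (abs_nonneg _))
  -- conclude f = 0
  have hfd : ∀ k, f (d k) = 0 := by
    intro k
    have hdk : d k = ((2 : ℝ) ^ k * (1 + ‖d k‖)) • c k := by
      rw [hc, smul_smul, mul_inv_cancel₀ (by positivity), one_smul]
    rw [hdk, map_smul, hzero, smul_zero]
  have hall : ∀ y, f y = 0 := by
    have hcont : Continuous fun _ : X => (0 : ℝ) := continuous_const
    have heq := Continuous.ext_on hd f.continuous hcont
      (by rintro y ⟨k, rfl⟩; simp [hfd k])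
    exact fun y => congrFun heq y
  exact ContinuousLinearMap.ext hall
end

section
/- Let X be a Banach space with dens X = κ where cf(κ) ≥ 𝔠⁺ (the successor of the continuum). Then X contains no overcomplete set. -/
open Cardinal

/-- The density character of a topological space: the least cardinality of a dense subset. -/
noncomputable def densityChar (X : Type*) [TopologicalSpace X] : Cardinal :=
  sInf {c : Cardinal | ∃ s : Set X, Dense s ∧ #s = c}

/-- If a set of cardinality `κ` is covered by fewer than `cf κ` sets (with the small index also
`< κ`), one of the pieces has cardinality `κ`. -/
lemma exists_inter_mk_eq {α ι : Type u} (S : Set α) (H : ι → Set α)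
    (hcov : ∀ s ∈ S, ∃ i, s ∈ H i) {κ : Cardinal}
    (hS : #S = κ) (hι : #ι < κ.ord.cof) (hι' : #ι < κ) (hκ : ℵ₀ ≤ κ) :
    ∃ i, #(↥(S ∩ H i)) = κ := by
  by_contra h
  push_neg at h
  have hlt : ∀ i, #(↥(S ∩ H i)) < κ := fun i =>
    lt_of_le_of_ne (hS ▸ Cardinal.mk_le_mk_of_subset Set.inter_subset_left) (h i)
  have hsub : S ⊆ ⋃ i, (S ∩ H i) := fun s hs => by
    obtain ⟨i, hi⟩ := hcov s hs
    exact Set.mem_iUnion.2 ⟨i, hs, hi⟩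
  have h1 : κ ≤ #(⋃ i, (S ∩ H i)) := hS ▸ Cardinal.mk_le_mk_of_subset hsub
  have h2 : #(⋃ i, (S ∩ H i)) ≤ #ι * ⨆ i, #(↥(S ∩ H i)) := Cardinal.mk_iUnion_le _
  have h3 : (⨆ i, #(↥(S ∩ H i))) < κ := Ordinal.iSup_lt hι hlt
  exact (h1.trans_lt (h2.trans_lt (Cardinal.mul_lt_of_lt hκ hι' h3))).false

/-- Separation of a point from the span of another point by a continuous functional. -/
lemma exists_functional_vanishing {X : Type*} [NormedAddCommGroup X] [NormedSpace ℝ X]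
    {x y : X} (hx : x ∉ Submodule.span ℝ {y}) :
    ∃ f : X →L[ℝ] ℝ, f x ≠ 0 ∧ f y = 0 := by
  have hclosed : IsClosed ((Submodule.span ℝ {y} : Submodule ℝ X) : Set X) :=
    (Submodule.span ℝ {y}).closed_of_finiteDimensional
  obtain ⟨f, u, hfs, hfx⟩ :=
    geometric_hahn_banach_closed_point (Submodule.span ℝ {y}).convex hclosed hx
  have h0 : (0 : ℝ) < u := by
    have := hfs 0 (Submodule.zero_mem _)
    simpa using this
  have hfy : f y = 0 := by
    by_contra hy
    have hmem : ((u + 1) / f y) • y ∈ (Submodule.span ℝ {y} : Submodule ℝ X) :=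
      Submodule.smul_mem _ _ (Submodule.mem_span_singleton_self y)
    have := hfs _ hmem
    rw [map_smul, smul_eq_mul, div_mul_cancel₀ _ hy] at this
    linarith
  exact ⟨f, ne_of_gt (lt_trans h0 hfx), hfy⟩

theorem stmt_7 {X : Type*} [NormedAddCommGroup X] [NormedSpace ℝ X] [CompleteSpace X]
    (κ : Cardinal) (hκ : densityChar X = κ)
    (hcof : Order.succ Cardinal.continuum ≤ (Cardinal.ord κ).cof) :
    ¬ ∃ S : Set X, #S = κ ∧
      ∀ Λ : Set X, Λ ⊆ S → #Λ = #S → Dense (Submodule.span ℝ Λ : Set X) := by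
  rintro ⟨S, hSκ, hover⟩
  -- κ is big
  have hsucc : Order.succ Cardinal.continuum ≤ κ := hcof.trans (Ordinal.cof_ord_le κ)
  have hcκ : Cardinal.continuum < κ := (Order.succ_le_iff.1 hsucc)
  have hκinf : ℵ₀ ≤ κ := Cardinal.aleph0_le_continuum.trans hcκ.le
  -- X is not "essentially one-dimensional"
  by_cases hsep : ∃ v : X, ∀ w : X, w ∈ Submodule.span ℝ {v}
  · -- then X is separable, so densityChar ≤ ℵ₀ < κ, contradiction
    obtain ⟨v, hv⟩ := hsep
    have hdr : DenseRange (fun q : ℚ => (q : ℝ) • v) := by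
      have hsurj : Function.Surjective (fun r : ℝ => r • v) := fun w => by
        obtain ⟨c, hc⟩ := Submodule.mem_span_singleton.1 (hv w)
        exact ⟨c, hc⟩
      have : DenseRange (fun r : ℝ => r • v) := hsurj.denseRange
      exact this.comp Rat.denseRange_cast (by continuity)
    have hle : densityChar X ≤ #(Set.range (fun q : ℚ => (q : ℝ) • v)) :=
      csInf_le' ⟨_, hdr, rfl⟩
    have hle2 : #(Set.range (fun q : ℚ => (q : ℝ) • v)) ≤ ℵ₀ :=
      (Set.countable_range _).le_aleph0
    rw [hκ] at hle
    exact absurd (hle.trans hle2) (not_le.2 (Cardinal.aleph0_le_continuum.trans_lt hcκ))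
  · push_neg at hsep
    obtain ⟨x, hx0⟩ := hsep 0
    have hxne : x ≠ 0 := fun h => hx0 (by rw [h]; exact Submodule.zero_mem _)
    obtain ⟨y, hyx⟩ := hsep x
    have hxy : x ∉ Submodule.span ℝ ({y} : Set X) := by
      intro hmem
      obtain ⟨c, hc⟩ := Submodule.mem_span_singleton.1 hmem
      have hcne : c ≠ 0 := by rintro rfl; exact hxne (by simpa using hc.symm)
      exact hyx (Submodule.mem_span_singleton.2 ⟨c⁻¹, by rw [← hc, smul_smul,
        inv_mul_cancel₀ hcne, one_smul]⟩)
    obtain ⟨f, hfx, hfy⟩ := exists_functional_vanishing hxy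
    obtain ⟨g, hgy, hgx⟩ := exists_functional_vanishing hyx
    -- the covering family of kernels
    set ι := Option (ULift.{_} ℝ) with hι
    let φ : ι → (X →L[ℝ] ℝ) := fun i => Option.rec g (fun t => f + t.down • g) i
    have hφx : ∀ i, φ i x ≠ 0 ∨ φ i y ≠ 0 := by
      rintro (_ | t)
      · exact Or.inr hgy
      · refine Or.inl ?_
        simp only [φ, ContinuousLinearMap.add_apply, ContinuousLinearMap.smul_apply, hgx,
          smul_eq_mul, mul_zero, add_zero]
        exact hfx
    have hcov : ∀ s ∈ S, ∃ i, s ∈ {v : X | φ i v = 0} := by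
      intro s _
      by_cases hg : g s = 0
      · exact ⟨none, hg⟩
      · refine ⟨some ⟨-(f s) / g s⟩, ?_⟩
        simp only [φ, Set.mem_setOf_eq, ContinuousLinearMap.add_apply,
          ContinuousLinearMap.smul_apply, smul_eq_mul]
        field_simp
        ring
    have hικ : #ι = Cardinal.continuum := by
      rw [hι, Cardinal.mk_option, Cardinal.mk_uLift, Cardinal.mk_real,
        Cardinal.lift_continuum, Cardinal.add_one_eq Cardinal.aleph0_le_continuum]
    obtain ⟨i, hi⟩ := exists_inter_mk_eq S (fun i => {v : X | φ i v = 0}) hcov hSκ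
      (hικ ▸ (Order.lt_succ_of_le le_rfl).trans_le hcof) (hικ ▸ hcκ) hκinf
    -- the piece spans a non-dense subspace
    have hdense := hover (S ∩ {v : X | φ i v = 0}) Set.inter_subset_left (by rw [hi, hSκ])
    have hker : (Submodule.span ℝ (S ∩ {v : X | φ i v = 0}) : Set X) ⊆
        ((LinearMap.ker (φ i).toLinearMap : Submodule ℝ X) : Set X) := by
      have : Submodule.span ℝ (S ∩ {v : X | φ i v = 0}) ≤ LinearMap.ker (φ i).toLinearMap :=
        Submodule.span_le.2 fun v hv => hv.2
      exact this
    have hclosed : IsClosed ((LinearMap.ker (φ i).toLinearMap : Submodule ℝ X) : Set X) :=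
      ContinuousLinearMap.isClosed_ker (φ i)
    have hall : ∀ v : X, φ i v = 0 := by
      intro v
      have : v ∈ closure (Submodule.span ℝ (S ∩ {v : X | φ i v = 0}) : Set X) :=
        hdense v
      have := (hclosed.closure_subset_iff.2 hker) this
      exact this
    rcases hφx i with h | h
    · exact h (hall x)
    · exact h (hall y)
end

section
/- Let κ ≥ ω₂ and let X be a Banach space with dens X = κ admitting a fundamental biorthogonal system {x_α; f_α}_{α<κ}. Then X contains no overcomplete set. -/
open Cardinal

universe u

/-- Combinatorial core: if `#ι = κ ≥ ℵ₂` and `μ : ι → Cardinal` with all values `< κ`,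
then some `ν < κ` bounds `μ` on an uncountable set. -/
theorem comb_aux {κ : Cardinal.{u}} (hκ2 : Cardinal.aleph 2 ≤ κ) {ι : Type u} (hι : #ι = κ)
    (μ : ι → Cardinal.{u}) (hμ : ∀ α, μ α < κ) :
    ∃ ν < κ, Cardinal.aleph 1 ≤ #{α | μ α ≤ ν} := by
  have hℵ0 : ℵ₀ ≤ κ := (aleph0_le_aleph 2).trans hκ2
  have h1κ : Cardinal.aleph 1 < κ := lt_of_lt_of_le (aleph_lt_aleph.2 one_lt_two) hκ2
  by_cases hreg : κ.IsRegular
  · -- regular case: take any set of size ℵ₁ and bound μ on it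
    obtain ⟨A, hA⟩ : ∃ A : Set ι, #A = Cardinal.aleph 1 :=
      le_mk_iff_exists_set.1 (by rw [hι]; exact h1κ.le)
    set ν : Cardinal := ⨆ a : A, μ a with hν
    have hνκ : ν < κ := by
      apply iSup_lt_of_isRegular hreg (by rw [hA]; exact h1κ)
      exact fun a => hμ a
    refine ⟨ν, hνκ, ?_⟩
    have hsub : A ⊆ {α | μ α ≤ ν} := fun a ha =>
      le_ciSup (Cardinal.bddAbove_range _) (⟨a, ha⟩ : A)
    calc Cardinal.aleph 1 = #A := hA.symm
      _ ≤ #{α | μ α ≤ ν} := mk_le_mk_of_subset hsub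
  · -- singular case
    by_contra hcon
    push_neg at hcon
    have hcof : κ.ord.cof < κ := by
      rcases lt_or_ge κ.ord.cof κ with h | h
      · exact h
      · exact absurd ⟨hℵ0, h⟩ hreg
    obtain ⟨J, g, hlsub, hJ⟩ := Ordinal.exists_lsub_cof κ.ord
    have hcover : (Set.univ : Set ι) ⊆ ⋃ j : J, {α | μ α ≤ (g j).card} := by
      intro α _
      have h1 : (μ α).ord < Ordinal.lsub g := by
        rw [hlsub]
        exact Cardinal.lt_ord.2 (by rw [Cardinal.card_ord]; exact hμ α)
      obtain ⟨j, hj⟩ := Ordinal.lt_lsub_iff.1 h1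
      refine Set.mem_iUnion.2 ⟨j, ?_⟩
      have h2 := Ordinal.card_le_card hj
      rwa [Cardinal.card_ord] at h2
    have hsmall : ∀ j : J, #{α | μ α ≤ (g j).card} ≤ ℵ₀ := by
      intro j
      have hgj : (g j).card < κ := by
        have : g j < κ.ord := hlsub ▸ Ordinal.lt_lsub g j
        exact Cardinal.lt_ord.1 this
      have hc := (countable_iff_lt_aleph_one _).2 (hcon (g j).card hgj)
      haveI := hc.to_subtype
      exact Cardinal.mk_le_aleph0
    have hbig : κ ≤ #(⋃ j : J, {α | μ α ≤ (g j).card}) := by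
      rw [← hι]
      have := mk_le_mk_of_subset hcover
      simpa using this
    have hlt : #(⋃ j : J, {α | μ α ≤ (g j).card}) < κ := by
      calc #(⋃ j : J, {α | μ α ≤ (g j).card})
          ≤ Cardinal.sum (fun j : J => #{α | μ α ≤ (g j).card}) := mk_iUnion_le_sum_mk
        _ ≤ Cardinal.sum (fun _ : J => ℵ₀) := Cardinal.sum_le_sum _ _ hsmall
        _ = #J * ℵ₀ := Cardinal.sum_const' _ _
        _ < κ := Cardinal.mul_lt_of_lt hℵ0 (by rw [hJ]; exact hcof)
            (aleph0_lt_aleph_one.trans h1κ)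
    exact absurd (hbig.trans_lt hlt) (lt_irrefl κ)

theorem stmt_8 {X : Type u} [NormedAddCommGroup X] [NormedSpace ℝ X] [CompleteSpace X]
    (κ : Cardinal) (hκ : densityChar X = κ) (hκ2 : Cardinal.aleph 2 ≤ κ)
    {ι : Type u} (hι : #ι = κ)
    (x : ι → X) (f : ι → (X →L[ℝ] ℝ))
    (hbi1 : ∀ α, f α (x α) = 1) (hbi2 : ∀ α β, α ≠ β → f α (x β) = 0)
    (hfund : Dense (Submodule.span ℝ (Set.range x) : Set X)) :
    ¬ ∃ S : Set X, #S = κ ∧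
      ∀ Λ : Set X, Λ ⊆ S → #Λ = #S → Dense (Submodule.span ℝ Λ : Set X) := by
  have hℵ0 : ℵ₀ ≤ κ := (aleph0_le_aleph 2).trans hκ2
  have h1κ : Cardinal.aleph 1 < κ := lt_of_lt_of_le (aleph_lt_aleph.2 one_lt_two) hκ2
  -- elements of the span have finite support
  have hfin : ∀ y ∈ Submodule.span ℝ (Set.range x), {α | f α y ≠ 0}.Finite := by
    intro y hy
    obtain ⟨c, rfl⟩ := Finsupp.mem_span_range_iff_exists_finsupp.1 hy
    apply Set.Finite.subset c.support.finite_toSet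
    intro α hα
    simp only [Set.mem_setOf_eq] at hα
    by_contra hmem
    apply hα
    rw [map_finsuppSum, Finsupp.sum]
    apply Finset.sum_eq_zero
    intro i hi
    have hne : α ≠ i := fun h => hmem (h ▸ hi)
    rw [map_smul, hbi2 α i hne, smul_zero]
  -- every vector has countable support
  have hcount : ∀ s : X, {α | f α s ≠ 0}.Countable := by
    intro s
    have hs : s ∈ closure (Submodule.span ℝ (Set.range x) : Set X) := hfund s
    obtain ⟨y, hy, hlim⟩ := mem_closure_iff_seq_limit.1 hs
    have hsub : {α | f α s ≠ 0} ⊆ ⋃ n, {α | f α (y n) ≠ 0} := by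
      intro α hα
      by_contra hn
      simp only [Set.mem_iUnion, Set.mem_setOf_eq, not_exists, not_not] at hn
      apply hα
      have hten : Filter.Tendsto (fun n => f α (y n)) Filter.atTop (nhds (f α s)) :=
        ((f α).continuous.tendsto s).comp hlim
      have hten' : Filter.Tendsto (fun _ : ℕ => (0 : ℝ)) Filter.atTop (nhds (f α s)) :=
        hten.congr hn
      exact tendsto_nhds_unique hten' tendsto_const_nhds
    exact (Set.countable_iUnion fun n => (hfin (y n) (hy n)).countable).mono hsub
  rintro ⟨S, hS, hover⟩
  set Z : ι → Set X := fun α => {s | s ∈ S ∧ f α s = 0} with hZdef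
  have hZsub : ∀ α, Z α ⊆ S := fun α s hs => hs.1
  -- some Z α has full cardinality κ
  obtain ⟨α, hα⟩ : ∃ α, #(Z α) = κ := by
    by_contra hno
    push_neg at hno
    have hμ : ∀ α, #(Z α) < κ := fun α =>
      lt_of_le_of_ne (hS ▸ mk_le_mk_of_subset (hZsub α)) (hno α)
    obtain ⟨ν, hν, hA⟩ := comb_aux hκ2 hι (fun α => #(Z α)) hμ
    obtain ⟨A, hAsub, hAcard⟩ := le_mk_iff_exists_subset.1 hA
    haveI : Nonempty A := Cardinal.mk_ne_zero_iff.1 (by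
      rw [hAcard]; exact (aleph_pos 1).ne')
    have hU : #(⋃ a ∈ A, Z a) < κ := by
      calc #(⋃ a ∈ A, Z a) ≤ #A * ⨆ a : A, #(Z a) := mk_biUnion_le Z A
        _ ≤ Cardinal.aleph 1 * ν := by
            apply mul_le_mul' (le_of_eq hAcard)
            exact ciSup_le' fun a => hAsub a.2
        _ < κ := Cardinal.mul_lt_of_lt hℵ0 h1κ hν
    have hSU : ¬ S ⊆ ⋃ a ∈ A, Z a := fun hsub =>
      absurd ((hS ▸ mk_le_mk_of_subset hsub).trans_lt hU) (lt_irrefl κ)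
    obtain ⟨s, hsS, hsU⟩ := Set.not_subset.1 hSU
    have hAs : A ⊆ {β | f β s ≠ 0} := by
      intro a ha h0
      exact hsU (Set.mem_biUnion ha ⟨hsS, h0⟩)
    have hle : Cardinal.aleph 1 ≤ ℵ₀ := by
      haveI := ((hcount s).mono hAs).to_subtype
      calc Cardinal.aleph 1 = #A := hAcard.symm
        _ ≤ ℵ₀ := Cardinal.mk_le_aleph0
    exact absurd hle (not_le.2 aleph0_lt_aleph_one)
  -- Z α is a full-cardinality subset of S contained in ker (f α), so it cannot span densely
  have hd : Dense (Submodule.span ℝ (Z α) : Set X) :=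
    hover (Z α) (hZsub α) (hα.trans hS.symm)
  have hker : (Submodule.span ℝ (Z α) : Set X) ⊆ {v | f α v = 0} := by
    have hle : Submodule.span ℝ (Z α) ≤ LinearMap.ker (f α : X →ₗ[ℝ] ℝ) :=
      Submodule.span_le.2 fun v hv => LinearMap.mem_ker.2 hv.2
    exact fun v hv => hle hv
  have hclosed : IsClosed {v : X | f α v = 0} :=
    isClosed_eq (f α).continuous continuous_const
  have hxα : x α ∈ {v : X | f α v = 0} :=
    closure_minimal hker hclosed (hd (x α))
  exact one_ne_zero ((hbi1 α).symm.trans hxα)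
end

section
/- Assume the continuum hypothesis. Let X be a Banach space with dens X = dens X* = ω₁ and let C ⊆ X be a set that cannot be covered by countably many hyperplanes. Then C contains an overcomplete set for X, i.e., a subset S with |S| = ω₁ such that every uncountable subset of S is linearly dense in X. -/
open Cardinal

lemma aux_CH.{u', v'} (h : Cardinal.continuum.{v'} = Cardinal.aleph.{v'} 1) :
    Cardinal.continuum.{u'} = Cardinal.aleph.{u'} 1 := by
  have h1 := congrArg Cardinal.lift.{u', v'} h
  rw [Cardinal.lift_continuum, Cardinal.lift_aleph, Ordinal.lift_one] at h1
  apply Cardinal.lift_injective.{v', u'}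
  rw [Cardinal.lift_continuum, Cardinal.lift_aleph, Ordinal.lift_one]
  exact h1

lemma densityChar_le_of_dense {X : Type*} [TopologicalSpace X] {s : Set X} (hs : Dense s) :
    densityChar X ≤ #s :=
  csInf_le' ⟨s, hs, rfl⟩

lemma exists_dense_of_densityChar {X : Type*} [TopologicalSpace X] :
    ∃ s : Set X, Dense s ∧ #s = densityChar X := by
  have h : ({c : Cardinal | ∃ s : Set X, Dense s ∧ #s = c}).Nonempty :=
    ⟨#(Set.univ : Set X), Set.univ, dense_univ, rfl⟩
  exact csInf_mem h

lemma mk_le_pow_of_dense {Y : Type u} [MetricSpace Y] {D : Set Y} (hD : Dense D) :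
    Cardinal.mk Y ≤ #D ^ Cardinal.aleph0 := by
  rcases isEmpty_or_nonempty Y with h | h
  · simp [mk_eq_zero Y]
  have hex : ∀ (x : Y) (n : ℕ), ∃ d : D, dist x (d : Y) < 1 / (n + 1) := by
    intro x n
    rcases Metric.dense_iff.mp hD x (1 / (n + 1)) (by positivity) with ⟨d, hd1, hd2⟩
    exact ⟨⟨d, hd2⟩, by simpa [dist_comm] using Metric.mem_ball.mp hd1⟩
  choose u hu using hex
  have hinj : Function.Injective u := by
    intro x y hxy
    have hlt : ∀ n : ℕ, dist x y < 2 / (n + 1) := by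
      intro n
      have h1 := hu x n
      have h2 := hu y n
      rw [hxy] at h1
      calc dist x y ≤ dist x (u y n : Y) + dist (u y n : Y) y := dist_triangle _ _ _
        _ < 1 / (n + 1) + 1 / (n + 1) := by
            rw [dist_comm (u y n : Y) y]; exact add_lt_add h1 h2
        _ = 2 / (n + 1) := by ring
    have : dist x y ≤ 0 := by
      by_contra hc
      push_neg at hc
      obtain ⟨n, hn⟩ := exists_nat_one_div_lt (half_pos hc)
      have := hlt n
      have h2 : (2 : ℝ) / (n + 1) = 2 * (1 / (n + 1)) := by ring
      rw [h2] at this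
      nlinarith
    exact dist_le_zero.mp this
  calc #Y ≤ #(ℕ → D) := mk_le_of_injective hinj
    _ ≤ #D ^ Cardinal.aleph0 := by
        rw [mk_arrow]
        simp

set_option maxHeartbeats 1000000 in
theorem stmt_10 {X : Type*} [NormedAddCommGroup X] [NormedSpace ℝ X] [CompleteSpace X]
    (CH : Cardinal.continuum = Cardinal.aleph 1)
    (hdX : densityChar X = Cardinal.aleph 1)
    (hdX' : densityChar (X →L[ℝ] ℝ) = Cardinal.aleph 1)
    (C : Set X)
    (hC : ∀ f : ℕ → (X →L[ℝ] ℝ), (∀ n, f n ≠ 0) → ¬ C ⊆ ⋃ n, {x : X | f n x = 0}) :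
    ∃ S : Set X, S ⊆ C ∧ #S = Cardinal.aleph 1 ∧
      ∀ Λ : Set X, Λ ⊆ S → ¬ Λ.Countable → Dense (Submodule.span ℝ Λ : Set X) := by
  classical
  -- a nonzero functional exists
  have hex0 : ∃ f₀ : X →L[ℝ] ℝ, f₀ ≠ 0 := by
    by_contra hall
    push_neg at hall
    have hsub : Dense ({0} : Set (X →L[ℝ] ℝ)) := by
      intro f
      have : f = 0 := hall f
      simp [this]
    have h1 : densityChar (X →L[ℝ] ℝ) ≤ #({0} : Set (X →L[ℝ] ℝ)) :=
      densityChar_le_of_dense hsub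
    rw [hdX', Cardinal.mk_singleton] at h1
    exact absurd (h1.trans_lt Cardinal.one_lt_aleph0).le
      (not_le.mpr Cardinal.aleph0_lt_aleph_one)
  obtain ⟨f₀, hf₀⟩ := hex0
  -- C is nonempty
  have hCne : C.Nonempty := by
    by_contra hce
    rw [Set.not_nonempty_iff_eq_empty] at hce
    exact hC (fun _ => f₀) (fun _ => hf₀) (by simp [hce])
  -- cardinality of the dual is at most aleph 1
  obtain ⟨D, hDdense, hDcard⟩ := exists_dense_of_densityChar (X := X →L[ℝ] ℝ)
  rw [hdX'] at hDcard
  have hdual_card : #(X →L[ℝ] ℝ) ≤ Cardinal.aleph 1 := by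
    have h1 : #(X →L[ℝ] ℝ) ≤ #D ^ Cardinal.aleph0 := mk_le_pow_of_dense hDdense
    rw [hDcard, ← aux_CH CH, Cardinal.continuum_power_aleph0, aux_CH CH] at h1
    exact h1
  -- the index well-order
  set I := (Cardinal.aleph 1).ord.ToType with hI
  have hmkI : #I = Cardinal.aleph 1 := by
    rw [hI, Cardinal.mk_toType, Cardinal.card_ord]
  -- initial segments of I are countable
  have hIio : ∀ β : I, (Set.Iio β).Countable := by
    intro β
    rw [Cardinal.countable_iff_lt_aleph_one]
    exact Cardinal.mk_Iio_ord_toType β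
  have hIic : ∀ β : I, (Set.Iic β).Countable := by
    intro β
    have : Set.Iic β = insert β (Set.Iio β) := by
      ext γ; simp [le_iff_lt_or_eq, or_comm]
    rw [this]
    exact (hIio β).insert β
  -- uncountable subsets of I are unbounded
  have hunb : ∀ B : Set I, ¬ B.Countable → ∀ α : I, ∃ β ∈ B, α < β := by
    intro B hB α
    by_contra hc
    push_neg at hc
    exact hB ((hIic α).mono (fun γ hγ => hc γ hγ))
  -- surjective enumeration of the nonzero functionals
  have hNZne : Nonempty {f : X →L[ℝ] ℝ // f ≠ 0} := ⟨⟨f₀, hf₀⟩⟩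
  have hNZle : #{f : X →L[ℝ] ℝ // f ≠ 0} ≤ #I := by
    rw [hmkI]
    exact (Cardinal.mk_subtype_le _).trans hdual_card
  obtain ⟨e⟩ := hNZle
  have hFsurj : Function.Surjective (Function.invFun e) := Function.invFun_surjective e.injective
  set F : I → {f : X →L[ℝ] ℝ // f ≠ 0} := Function.invFun e with hFdef
  -- the sets from which we pick points
  have hT : ∀ β : I, {x : X | x ∈ C ∧ ∀ α : I, α < β → (F α).1 x ≠ 0}.Nonempty := by
    intro β
    rcases Set.eq_empty_or_nonempty (Set.Iio β) with hbe | hbne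
    · obtain ⟨x, hxC, -⟩ := Set.not_subset.mp (hC (fun _ => f₀) (fun _ => hf₀))
      refine ⟨x, hxC, fun α hα => ?_⟩
      exact absurd (Set.mem_Iio.mpr hα) (by simp [hbe])
    · obtain ⟨σ, hσ⟩ := (hIio β).exists_eq_range hbne
      obtain ⟨x, hxC, hxU⟩ := Set.not_subset.mp
        (hC (fun n => (F (σ n)).1) (fun n => (F (σ n)).2))
      refine ⟨x, hxC, fun α hα => ?_⟩
      have : α ∈ Set.range σ := by rw [← hσ]; exact hα
      obtain ⟨n, rfl⟩ := this
      intro h0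
      exact hxU (Set.mem_iUnion.mpr ⟨n, h0⟩)
  set g : I → X := fun β => (hT β).choose with hgdef
  have hg1 : ∀ β, g β ∈ C := fun β => (hT β).choose_spec.1
  have hg2 : ∀ β, ∀ α : I, α < β → (F α).1 (g β) ≠ 0 := fun β => (hT β).choose_spec.2
  refine ⟨Set.range g, ?_, ?_, ?_⟩
  · rintro x ⟨β, rfl⟩; exact hg1 β
  · -- cardinality
    have hle : #(Set.range g) ≤ Cardinal.aleph 1 := by
      rw [← hmkI]; exact Cardinal.mk_range_le
    refine le_antisymm hle ?_
    have hnc : ¬ (Set.range g).Countable := by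
      intro hcnt
      -- some fiber is uncountable
      have hfib : ∃ x : X, ¬ (g ⁻¹' {x}).Countable := by
        by_contra hfibc
        push_neg at hfibc
        have huniv : (Set.univ : Set I).Countable := by
          have h2 : (⋃ x ∈ Set.range g, g ⁻¹' {x}).Countable :=
            Set.Countable.biUnion hcnt (fun x _ => hfibc x)
          refine h2.mono ?_
          intro β _
          exact Set.mem_biUnion ⟨β, rfl⟩ rfl
        have : Countable I := Set.countable_univ_iff.mp huniv
        have : #I ≤ Cardinal.aleph0 := Cardinal.mk_le_aleph0
        rw [hmkI] at this
        exact absurd this (not_le.mpr Cardinal.aleph0_lt_aleph_one)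
      obtain ⟨x, hxunc⟩ := hfib
      -- x is outside every hyperplane
      have hnz : ∀ f : X →L[ℝ] ℝ, f ≠ 0 → f x ≠ 0 := by
        intro f hf
        obtain ⟨α, hα⟩ := hFsurj ⟨f, hf⟩
        obtain ⟨β, hβ, hαβ⟩ := hunb _ hxunc α
        have h1 := hg2 β α hαβ
        rw [hα] at h1
        rw [Set.mem_preimage, Set.mem_singleton_iff] at hβ
        rwa [hβ] at h1
      -- hence the dual is one-dimensional
      have hf₀x : f₀ x ≠ 0 := hnz f₀ hf₀
      set f₁ : X →L[ℝ] ℝ := (f₀ x)⁻¹ • f₀ with hf₁def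
      have hf₁x : f₁ x = 1 := by
        simp [hf₁def, inv_mul_cancel₀ hf₀x]
      have hspan : ∀ G : X →L[ℝ] ℝ, G = G x • f₁ := by
        intro G
        by_contra hG
        have hD : G - G x • f₁ ≠ 0 := sub_ne_zero.mpr hG
        apply hnz _ hD
        simp [ContinuousLinearMap.sub_apply, ContinuousLinearMap.smul_apply, hf₁x]
      -- so the dual is separable
      have hdense : Dense (Set.range (fun q : ℚ => (q : ℝ) • f₁)) := by
        rw [Metric.dense_iff]
        intro G r hr
        have hpos : (0:ℝ) < r / (‖f₁‖ + 1) := by positivity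
        obtain ⟨q, hq⟩ := exists_rat_near (G x) hpos
        refine ⟨(q : ℝ) • f₁, ?_, ⟨q, rfl⟩⟩
        rw [Metric.mem_ball]
        have hGx : G = G x • f₁ := hspan G
        have hdiff : (q : ℝ) • f₁ - G = ((q : ℝ) - G x) • f₁ := by
          rw [sub_smul (q : ℝ) (G x) f₁, ← hGx]
        rw [dist_eq_norm, hdiff, norm_smul ((q:ℝ) - G x) f₁]
        have h1 : ‖(q : ℝ) - G x‖ < r / (‖f₁‖ + 1) := by
          rw [Real.norm_eq_abs, abs_sub_comm]
          exact hq
        have h2 : (0:ℝ) ≤ ‖f₁‖ := norm_nonneg _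
        have h3 : ‖(q : ℝ) - G x‖ * (‖f₁‖ + 1) < r := by
          rw [lt_div_iff₀ (by linarith)] at h1
          linarith [h1]
        nlinarith [norm_nonneg ((q : ℝ) - G x)]
      have hsep : densityChar (X →L[ℝ] ℝ) ≤ Cardinal.aleph0 := by
        have := densityChar_le_of_dense hdense
        refine this.trans ?_
        exact Cardinal.mk_le_aleph0_iff.mpr
          (Set.countable_coe_iff.mpr (Set.countable_range _))
      rw [hdX'] at hsep
      exact absurd hsep (not_le.mpr Cardinal.aleph0_lt_aleph_one)
    rw [Cardinal.countable_iff_lt_aleph_one] at hnc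
    exact not_lt.mp hnc
  · -- density of spans of uncountable subsets
    intro Λ hΛS hΛunc
    by_contra hnd
    have hw : ∃ w : X, w ∉ closure (Submodule.span ℝ Λ : Set X) := by
      by_contra hc
      push_neg at hc
      exact hnd (fun x => hc x)
    obtain ⟨w, hw⟩ := hw
    set N := (Submodule.span ℝ Λ).topologicalClosure with hNdef
    have hwN : w ∉ (N : Set X) := by
      rwa [hNdef, Submodule.topologicalClosure_coe]
    obtain ⟨f, u, hfu, huf⟩ :=
      geometric_hahn_banach_closed_point (N.convex) (Submodule.span ℝ Λ).isClosed_topologicalClosure hwN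
    have hu0 : 0 < u := by
      have := hfu 0 N.zero_mem
      rwa [map_zero] at this
    have hfN : ∀ y ∈ (N : Set X), f y = 0 := by
      intro y hy
      by_contra hfy
      have h1 : f (((|u| + 1) / f y) • y) < u := hfu _ (N.smul_mem _ hy)
      rw [map_smul, smul_eq_mul, div_mul_cancel₀ _ hfy] at h1
      have : u ≤ |u| := le_abs_self u
      linarith
    have hfne : f ≠ 0 := by
      intro h0
      rw [h0] at huf
      simp at huf
      linarith
    obtain ⟨α, hα⟩ := hFsurj ⟨f, hfne⟩
    have hB : ¬ {β : I | g β ∈ Λ}.Countable := by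
      intro hBc
      apply hΛunc
      have hsub : Λ ⊆ g '' {β : I | g β ∈ Λ} := by
        intro x hx
        obtain ⟨β, rfl⟩ := hΛS hx
        exact ⟨β, hx, rfl⟩
      exact ((hBc.image g).mono hsub)
    obtain ⟨β, hβB, hαβ⟩ := hunb _ hB α
    have h1 := hg2 β α hαβ
    rw [hα] at h1
    apply h1
    apply hfN
    exact (Submodule.span ℝ Λ).le_topologicalClosure (Submodule.subset_span hβB)
end

section
/- Let X be a Banach space and let C ⊆ X be a convex, weakly compact, linearly dense subset. Then C cannot be covered by countably many hyperplanes. -/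
theorem stmt_12 {X : Type*} [NormedAddCommGroup X] [NormedSpace ℝ X] [CompleteSpace X]
    (C : Set X) (hconv : Convex ℝ C)
    (hwk : IsCompact ((toWeakSpace ℝ X) '' C : Set (WeakSpace ℝ X)))
    (hdense : Dense (Submodule.span ℝ C : Set X)) :
    ∀ f : ℕ → (X →L[ℝ] ℝ), (∀ n, f n ≠ 0) → ¬ C ⊆ ⋃ n, {x : X | f n x = 0} := by
  intro f hf hsub
  classical
  set ι := toWeakSpace ℝ X with hι
  -- C is nonempty
  rcases C.eq_empty_or_nonempty with hC | ⟨c₀, hc₀⟩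
  · rw [hC] at hdense
    simp only [Submodule.span_empty, Submodule.bot_coe] at hdense
    have hz : ∀ x : X, x = 0 := by
      intro x
      have hx := hdense x
      rwa [closure_singleton, Set.mem_singleton_iff] at hx
    exact hf 0 (ContinuousLinearMap.ext fun x => by rw [hz x]; simp)
  -- Hausdorff weak topology via Hahn-Banach
  haveI hT2 : T2Space (WeakSpace ℝ X) := by
    refine (WeakBilin.isEmbedding (B := (topDualPairing ℝ X).flip) ?_).t2Space
    intro x y h
    refine (NormedSpace.eq_iff_forall_dual_eq ℝ).mpr fun g => ?_
    exact LinearMap.congr_fun h g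
  -- the compact subtype
  set K : Set (WeakSpace ℝ X) := ι '' C with hK
  haveI : CompactSpace K := isCompact_iff_compactSpace.mp hwk
  haveI : Nonempty K := ⟨⟨ι c₀, Set.mem_image_of_mem _ hc₀⟩⟩
  -- closed cover of K by kernels
  have hcont : ∀ n, Continuous fun w : WeakSpace ℝ X => f n (ι.symm w) :=
    fun n => WeakBilin.eval_continuous ((topDualPairing ℝ X).flip) (f n)
  set S : ℕ → Set K := fun n => {z : K | f n (ι.symm z.val) = 0} with hS
  have hclosed : ∀ n, IsClosed (S n) := by
    intro n
    have : IsClosed {w : WeakSpace ℝ X | f n (ι.symm w) = 0} :=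
      isClosed_eq (hcont n) continuous_const
    exact this.preimage continuous_subtype_val
  have hcover : ⋃ n, S n = Set.univ := by
    ext z
    simp only [Set.mem_iUnion, Set.mem_univ, iff_true]
    obtain ⟨x, hxC, hxz⟩ := z.2
    obtain ⟨_, ⟨n, rfl⟩, hn⟩ := hsub hxC
    refine ⟨n, ?_⟩
    show f n (ι.symm z.val) = 0
    rw [← hxz, LinearEquiv.symm_apply_apply]
    simpa using hn
  obtain ⟨j, z₀, hz₀⟩ := nonempty_interior_of_iUnion_of_closed hclosed hcover
  -- extract an open set in the weak topology
  obtain ⟨V, hVsub, hVopen, hz₀V⟩ := mem_interior.mp hz₀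
  obtain ⟨U, hUopen, hUV⟩ := isOpen_induced_iff.mp hVopen
  -- a point of C where f j does not vanish
  have hy : ∃ y ∈ C, f j y ≠ 0 := by
    by_contra h
    push_neg at h
    have hsp : (Submodule.span ℝ C : Set X) ⊆ {x | f j x = 0} := by
      have : C ⊆ {x | f j x = 0} := fun x hx => h x hx
      intro x hx
      exact (Submodule.span_le (p := LinearMap.ker (f j : X →ₗ[ℝ] ℝ))).mpr (fun z hz => LinearMap.mem_ker.mpr (this hz)) hx
    have hcl : IsClosed {x : X | f j x = 0} :=
      isClosed_eq (f j).continuous continuous_const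
    have huniv : (Set.univ : Set X) ⊆ {x | f j x = 0} := by
      rw [← hdense.closure_eq]
      exact closure_minimal hsp hcl
    exact hf j (ContinuousLinearMap.ext fun x => huniv (Set.mem_univ x))
  obtain ⟨y, hyC, hyne⟩ := hy
  -- the base point
  obtain ⟨x₀, hx₀C, hx₀z⟩ := z₀.2
  have hfx₀ : f j x₀ = 0 := by
    have := interior_subset hz₀
    rw [hS] at this
    simp only [Set.mem_setOf_eq] at this
    rw [← hx₀z] at this
    simpa using this
  -- key property of U
  have hkey : ∀ w ∈ C, ι w ∈ U → f j w = 0 := by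
    intro w hwC hwU
    have hmem : (⟨ι w, Set.mem_image_of_mem _ hwC⟩ : K) ∈ V := by
      rw [← hUV]; exact hwU
    have := hVsub hmem
    simp only [hS, Set.mem_setOf_eq] at this
    simpa using this
  -- the segment map
  have hz₀U : (z₀ : WeakSpace ℝ X) ∈ U := by
    have : z₀ ∈ V := hz₀V
    rw [← hUV] at this
    exact this
  have hφcont : Continuous fun t : ℝ => ι (x₀ + t • (y - x₀)) :=
    (toWeakSpaceCLM ℝ X).continuous.comp (continuous_const.add (continuous_id.smul continuous_const))
  have hnhds : (fun t : ℝ => ι (x₀ + t • (y - x₀))) ⁻¹' U ∈ nhds (0 : ℝ) := by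
    refine (hφcont.continuousAt).preimage_mem_nhds ?_
    have : ι (x₀ + (0 : ℝ) • (y - x₀)) = z₀.val := by
      rw [← hx₀z]; simp
    rw [this]
    exact hUopen.mem_nhds hz₀U
  have hev : ∀ᶠ t : ℝ in nhdsWithin 0 (Set.Ioi 0),
      ι (x₀ + t • (y - x₀)) ∈ U ∧ t ∈ Set.Ioo (0 : ℝ) 1 := by
    filter_upwards [nhdsWithin_le_nhds hnhds, Ioo_mem_nhdsGT_of_mem
      (Set.mem_Ico.mpr ⟨le_refl (0 : ℝ), one_pos⟩)] with t h1 h2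
    exact ⟨h1, h2⟩
  obtain ⟨t, htU, ht0, ht1⟩ := hev.exists
  -- the point x₀ + t • (y - x₀) lies in C
  have hmemC : x₀ + t • (y - x₀) ∈ C := by
    have h1 : (1 - t) • x₀ + t • y ∈ C :=
      hconv hx₀C hyC (by linarith) (le_of_lt ht0) (by ring)
    have : x₀ + t • (y - x₀) = (1 - t) • x₀ + t • y := by
      rw [smul_sub, sub_smul]; module
    rwa [this]
  have := hkey _ hmemC htU
  rw [map_add, hfx₀, map_smul] at this
  simp only [map_sub, hfx₀, sub_zero, smul_eq_mul, zero_add] at this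
  rcases mul_eq_zero.mp this with h | h
  · exact absurd h (ne_of_gt ht0)
  · exact hyne h
end

section
/- Every finite-dimensional real Banach space contains a dense overcomplete sequence: a sequence (x_j)_{j<ω} that is dense in X and such that every subsequence spans X. -/
open Metric Set Submodule

section Aux

variable {X : Type*} [NormedAddCommGroup X] [NormedSpace ℝ X] [FiniteDimensional ℝ X]

lemma key_step (F : Finset X) (u : X) (r : ℝ) (hr : 0 < r) :
    ∃ y, y ∈ Metric.ball u r ∧ ∀ s : Finset X, (↑s : Set X) ⊆ (↑F : Set X) →
      s.card < Module.finrank ℝ X → y ∉ Submodule.span ℝ (s : Set X) := by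
  classical
  let ι := {s : Finset X // s ⊆ F ∧ s.card < Module.finrank ℝ X}
  haveI : Finite ι := by
    apply Finite.of_injective
      (fun s : ι => (⟨s.1, Finset.mem_powerset.2 s.2.1⟩ : {t // t ∈ F.powerset}))
    intro a b h
    cases a; cases b
    apply Subtype.ext
    simpa using h
  have hdense : Dense (⋂ s : ι, ((Submodule.span ℝ (↑s.1 : Set X) : Submodule ℝ X) : Set X)ᶜ) := by
    apply dense_iInter_of_isOpen
    · intro s
      exact (Submodule.closed_of_finiteDimensional _).isOpen_compl
    · intro s
      rw [← interior_eq_empty_iff_dense_compl]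
      by_contra h
      have htop : Submodule.span ℝ (↑s.1 : Set X) = ⊤ :=
        Submodule.eq_top_of_nonempty_interior' _ (Set.nonempty_iff_ne_empty.2 h)
      have h2 := finrank_span_finset_le_card (R := ℝ) s.1
      rw [Set.finrank, htop, finrank_top] at h2
      exact absurd h2 (not_le.2 s.2.2)
  obtain ⟨y, hy1, hy2⟩ := hdense.inter_open_nonempty (Metric.ball u r)
    Metric.isOpen_ball (Metric.nonempty_ball.2 hr)
  refine ⟨y, hy1, fun s hsF hcard hmem => ?_⟩
  have := Set.mem_iInter.1 hy2 ⟨s, Finset.coe_subset.1 hsF, hcard⟩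
  exact this hmem

noncomputable def pickNext [DecidableEq X] (v : ℕ → X) (L : List X) (j : ℕ) : X :=
  (key_step L.toFinset (v j) (1 / (j + 1)) (by positivity)).choose

lemma pickNext_spec [DecidableEq X] (v : ℕ → X) (L : List X) (j : ℕ) :
    pickNext v L j ∈ Metric.ball (v j) (1 / (j + 1)) ∧
      ∀ s : Finset X, (↑s : Set X) ⊆ (↑L.toFinset : Set X) → s.card < Module.finrank ℝ X →
        pickNext v L j ∉ Submodule.span ℝ (s : Set X) :=
  (key_step L.toFinset (v j) (1 / (j + 1)) (by positivity)).choose_spec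

noncomputable def chainList [DecidableEq X] (v : ℕ → X) : ℕ → List X
  | 0 => []
  | (j + 1) => chainList v j ++ [pickNext v (chainList v j) j]

noncomputable def seqX [DecidableEq X] (v : ℕ → X) (j : ℕ) : X := pickNext v (chainList v j) j

lemma mem_chainList [DecidableEq X] (v : ℕ → X) {i j : ℕ} (h : i < j) : seqX v i ∈ chainList v j := by
  induction j with
  | zero => omega
  | succ j ih =>
    rcases Nat.lt_succ_iff_lt_or_eq.1 h with h' | h'
    · exact List.mem_append.2 (Or.inl (ih h'))
    · subst h'
      exact List.mem_append.2 (Or.inr (List.mem_singleton.2 rfl))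

lemma seqX_ball [DecidableEq X] (v : ℕ → X) (j : ℕ) : seqX v j ∈ Metric.ball (v j) (1 / (j + 1)) :=
  (pickNext_spec v (chainList v j) j).1

lemma seqX_not_mem_span [DecidableEq X] (v : ℕ → X) (j : ℕ) (s : Finset X)
    (hs : (↑s : Set X) ⊆ {z | ∃ i < j, seqX v i = z}) (hcard : s.card < Module.finrank ℝ X) :
    seqX v j ∉ Submodule.span ℝ (s : Set X) := by
  apply (pickNext_spec v (chainList v j) j).2 s _ hcard
  intro z hz
  obtain ⟨i, hi, rfl⟩ := hs hz
  simpa using mem_chainList v hi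

lemma seqX_linearIndependent [DecidableEq X] (v : ℕ → X) (T : Finset ℕ) (hT : T.card ≤ Module.finrank ℝ X) :
    (LinearIndependent ℝ (fun b => b : (seqX v '' ↑T) → X)) ∧ Set.InjOn (seqX v) ↑T := by
  classical
  induction T using Finset.induction_on_max with
  | empty =>
    have he : seqX v '' (↑(∅ : Finset ℕ) : Set ℕ) = (∅ : Set X) := by simp
    rw [he]
    exact ⟨linearIndependent_empty ℝ X, by simp⟩
  | insert a T hmax ih =>
    have haT : a ∉ T := fun h => lt_irrefl a (hmax a h)
    rw [Finset.card_insert_of_notMem haT] at hT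
    obtain ⟨ihli, ihinj⟩ := ih (by omega)
    have hnot : seqX v a ∉ Submodule.span ℝ (seqX v '' ↑T) := by
      have h1 : (↑(T.image (seqX v)) : Set X) = seqX v '' ↑T := Finset.coe_image
      rw [← h1]
      apply seqX_not_mem_span v a
      · intro z hz
        rw [h1] at hz
        obtain ⟨i, hi, rfl⟩ := hz
        exact ⟨i, hmax i hi, rfl⟩
      · calc (T.image (seqX v)).card ≤ T.card := Finset.card_image_le
          _ < Module.finrank ℝ X := by omega
    constructor
    · have himg : seqX v '' ↑(insert a T) = insert (seqX v a) (seqX v '' ↑T) := by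
        rw [Finset.coe_insert, Set.image_insert_eq]
      rw [himg]
      exact LinearIndepOn.id_insert ihli hnot
    · rw [Finset.coe_insert]
      refine (Set.injOn_insert (fun h => lt_irrefl a (hmax a h))).2 ⟨ihinj, ?_⟩
      intro h
      exact hnot (Submodule.subset_span h)

end Aux

theorem stmt_14 {X : Type*} [NormedAddCommGroup X] [NormedSpace ℝ X]
    [FiniteDimensional ℝ X] (hd : 1 ≤ Module.finrank ℝ X) :
    ∃ x : ℕ → X, DenseRange x ∧
      ∀ M : Set ℕ, M.Infinite → Submodule.span ℝ (x '' M) = ⊤ := by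
  classical
  letI : DecidableEq X := Classical.decEq X
  haveI : Nonempty X := ⟨0⟩
  obtain ⟨u, hu⟩ := TopologicalSpace.exists_dense_seq X
  set v : ℕ → X := fun j => u (Nat.unpair j).1 with hv
  refine ⟨seqX v, ?_, ?_⟩
  · rw [Metric.denseRange_iff]
    intro y r hr
    obtain ⟨k, hk⟩ := Metric.denseRange_iff.1 hu y (r / 2) (by linarith)
    obtain ⟨n, hn⟩ := exists_nat_gt (2 / r)
    set j := Nat.pair k n with hj
    refine ⟨j, ?_⟩
    have hvj : v j = u k := by simp [hv, hj, Nat.unpair_pair]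
    have hball := seqX_ball v j
    rw [Metric.mem_ball, hvj] at hball
    have hjn : (n : ℝ) ≤ (j : ℝ) := by exact_mod_cast Nat.right_le_pair k n
    have h2r : 0 < 2 / r := by positivity
    have hnpos : 0 < (n : ℝ) := lt_trans h2r hn
    have hsmall : 1 / ((j : ℝ) + 1) < r / 2 := by
      rw [div_lt_div_iff₀ (by linarith) (by norm_num)]
      have : 2 / r < (j : ℝ) + 1 := by linarith
      rw [div_lt_iff₀ hr] at this
      linarith
    calc dist y (seqX v j) ≤ dist y (u k) + dist (u k) (seqX v j) := dist_triangle _ _ _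
      _ < r / 2 + r / 2 := by
          rw [dist_comm (u k)]
          exact add_lt_add hk (lt_trans hball hsmall)
      _ = r := by ring
  · intro M hM
    obtain ⟨T, hTM, hTcard⟩ := hM.exists_subset_card_eq (Module.finrank ℝ X)
    obtain ⟨hli, hinj⟩ := seqX_linearIndependent v T (le_of_eq hTcard)
    have h1 : (↑(T.image (seqX v)) : Set X) = seqX v '' ↑T := Finset.coe_image
    have hli' : LinearIndependent ℝ (fun b => b : (↑(T.image (seqX v)) : Set X) → X) := by
      rw [h1]; exact hli
    have hcard : Fintype.card (↑(T.image (seqX v)) : Set X) = Module.finrank ℝ X := by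
      simp only [Finset.coe_sort_coe, Fintype.card_coe]
      rw [Finset.card_image_of_injOn hinj, hTcard]
    have htop := hli'.span_eq_top_of_card_eq_finrank' hcard
    rw [Subtype.range_coe] at htop
    rw [eq_top_iff, ← htop]
    apply Submodule.span_mono
    rw [h1]
    exact Set.image_mono hTM
end

section
/- Let (x_n)_{n<ω} be an almost overcomplete sequence in a normed space X. If (x_n) converges weakly to some x ∈ X, then (x_n) converges to x in norm. -/
open Filter Topology

lemma aux_fd_tendsto {Q : Type*} [NormedAddCommGroup Q] [NormedSpace ℝ Q]
    [FiniteDimensional ℝ Q] (q : ℕ → Q) (c : Q)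
    (h : ∀ g : Q →L[ℝ] ℝ, Tendsto (fun n => g (q n)) atTop (𝓝 (g c))) :
    Tendsto q atTop (𝓝 c) := by
  classical
  let b := Module.finBasis ℝ Q
  let e := b.equivFun.toContinuousLinearEquiv
  have he : Tendsto (fun n => e (q n)) atTop (𝓝 (e c)) := by
    rw [tendsto_pi_nhds]
    intro i
    exact h ((ContinuousLinearMap.proj (R := ℝ) (φ := fun _ => ℝ) i).comp
      (e : Q →L[ℝ] (Fin (Module.finrank ℝ Q) → ℝ)))
  have h2 := (e.symm.continuous.tendsto (e c)).comp he
  have h3 : (⇑e.symm ∘ fun n => e (q n)) = q := by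
    funext n; simp
  rw [h3] at h2
  simpa using h2

lemma aux_step {X : Type*} [NormedAddCommGroup X] [NormedSpace ℝ X]
    (x : ℕ → X) (l : X)
    (hweak : ∀ f : X →L[ℝ] ℝ, Tendsto (fun n => f (x n)) atTop (𝓝 (f l)))
    {ε : ℝ} (hε : 0 < ε) {S : Set ℕ} (hS : S.Infinite)
    (hSx : ∀ n ∈ S, ε ≤ ‖x n - l‖)
    {δ : ℝ} (hδ0 : 0 < δ) (hδ1 : δ ≤ 1)
    (F : Submodule ℝ X) (hF : FiniteDimensional ℝ F) (N : ℕ) :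
    ∃ n ∈ S, N ≤ n ∧ ∀ u ∈ F, ∀ t : ℝ,
      (1 - δ) * ‖u‖ ≤ ‖u + t • (x n - l)‖ := by
  classical
  have hFc : IsCompact ((F : Set X) ∩ Metric.sphere 0 1) := by
    have h1 : IsCompact (Metric.sphere (0 : F) 1) := isCompact_sphere _ _
    have h2 := h1.image continuous_subtype_val
    convert h2 using 1
    ext v
    simp only [Set.mem_inter_iff, mem_sphere_zero_iff_norm, Set.mem_image,
      SetLike.mem_coe]
    constructor
    · rintro ⟨hvF, hv1⟩
      exact ⟨⟨v, hvF⟩, hv1, rfl⟩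
    · rintro ⟨w, hw1, rfl⟩
      exact ⟨w.2, hw1⟩
  obtain ⟨T, hTsub, hTfin, hTcover⟩ :=
    hFc.finite_cover_balls (e := δ/2) (by positivity)
  have hgex : ∀ u₀ : X, ∃ g : X →L[ℝ] ℝ, ‖g‖ ≤ 1 ∧ g u₀ = ‖u₀‖ := fun u₀ =>
    exists_dual_vector'' ℝ u₀
  choose g hg1 hg2 using hgex
  have hconv : ∀ u₀, Tendsto (fun n => (g u₀) (x n - l)) atTop (𝓝 0) := by
    intro u₀
    have h3 := (hweak (g u₀)).sub (tendsto_const_nhds (x := (g u₀) l))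
    simpa [map_sub] using h3
  have hev : ∀ᶠ n in atTop, ∀ u₀ ∈ T, |(g u₀) (x n - l)| < δ * ε / 4 := by
    rw [Filter.eventually_all_finite hTfin]
    intro u₀ _
    have h4 := (NormedAddCommGroup.tendsto_nhds_zero.1 (hconv u₀)) (δ * ε / 4)
      (by positivity)
    simpa [Real.norm_eq_abs] using h4
  obtain ⟨N1, hN1⟩ := eventually_atTop.1 hev
  obtain ⟨n, hnS, hn⟩ := hS.exists_gt (max N N1)
  refine ⟨n, hnS, le_of_lt (lt_of_le_of_lt (le_max_left _ _) hn), ?_⟩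
  intro u huF t
  rcases eq_or_ne u 0 with rfl | hu0
  · simp only [norm_zero, mul_zero, zero_add]
    exact norm_nonneg _
  set y := x n - l with hydef
  have hyn : ε ≤ ‖y‖ := hSx n hnS
  have hsm : ∀ u₀ ∈ T, |(g u₀) y| < δ * ε / 4 :=
    hN1 n (le_of_lt (lt_of_le_of_lt (le_max_right _ _) hn))
  have hρ : 0 < ‖u‖ := norm_pos_iff.2 hu0
  set ρ := ‖u‖ with hρdef
  have hu' : (ρ⁻¹ • u) ∈ (F : Set X) ∩ Metric.sphere 0 1 := by
    constructor
    · exact F.smul_mem _ huF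
    · rw [mem_sphere_zero_iff_norm, norm_smul, norm_inv, Real.norm_eq_abs,
        abs_of_pos hρ]
      field_simp
      exact hρdef.symm
  obtain ⟨u₀, hu₀T, hu₀ball⟩ := Set.mem_iUnion₂.1 (hTcover hu')
  have hu₀mem := hTsub hu₀T
  have hu₀norm : ‖u₀‖ = 1 := by
    have := hu₀mem.2
    rwa [mem_sphere_zero_iff_norm] at this
  have hdist : ‖ρ⁻¹ • u - u₀‖ < δ / 2 := by
    have := Metric.mem_ball.1 hu₀ball
    rwa [dist_eq_norm] at this
  rcases le_or_gt (|t|) (2 * ρ / ε) with hcase | hcase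
  · -- functional bound
    have h5 : (g u₀) (u + t • y) ≤ ‖u + t • y‖ := by
      calc (g u₀) (u + t • y) ≤ |(g u₀) (u + t • y)| := le_abs_self _
        _ ≤ ‖g u₀‖ * ‖u + t • y‖ := (g u₀).le_opNorm _
        _ ≤ 1 * ‖u + t • y‖ := by
            exact mul_le_mul_of_nonneg_right (hg1 u₀) (norm_nonneg _)
        _ = ‖u + t • y‖ := one_mul _
    have h6 : (g u₀) u = ρ * (g u₀) (ρ⁻¹ • u) := by
      rw [map_smul, smul_eq_mul]
      field_simp
    have h7 : 1 - δ/2 ≤ (g u₀) (ρ⁻¹ • u) := by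
      have h8 : |(g u₀) (ρ⁻¹ • u - u₀)| ≤ ‖g u₀‖ * ‖ρ⁻¹ • u - u₀‖ :=
        (g u₀).le_opNorm _
      have h9 : ‖g u₀‖ * ‖ρ⁻¹ • u - u₀‖ ≤ 1 * (δ/2) := by
        apply mul_le_mul (hg1 u₀) (le_of_lt hdist) (norm_nonneg _) zero_le_one
      have h10 : (g u₀) (ρ⁻¹ • u) = (g u₀) u₀ + (g u₀) (ρ⁻¹ • u - u₀) := by
        rw [← map_add]; congr 1; abel
      rw [h10, hg2 u₀, hu₀norm]
      have := abs_le.1 (h8.trans h9)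
      linarith [this.1]
    have h11 : |(g u₀) (t • y)| ≤ (2 * ρ / ε) * (δ * ε / 4) := by
      rw [map_smul, smul_eq_mul, abs_mul]
      apply mul_le_mul hcase (le_of_lt (hsm u₀ hu₀T)) (abs_nonneg _)
      positivity
    have h12 : (g u₀) (u + t • y) = (g u₀) u + (g u₀) (t • y) := map_add _ _ _
    have h13 : (2 * ρ / ε) * (δ * ε / 4) = ρ * δ / 2 := by
      field_simp; ring
    have habs := abs_le.1 h11
    rw [h13] at habs
    have : (1 - δ) * ρ ≤ (g u₀) (u + t • y) := by
      rw [h12, h6]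
      nlinarith [habs.1, h7, hρ]
    linarith [h5]
  · -- large t
    have h14 : ‖t • y‖ ≤ ‖u + t • y‖ + ‖u‖ := by
      have := norm_add_le (u + t • y) (-u)
      simpa using this
    have h15 : ‖t • y‖ = |t| * ‖y‖ := by
      rw [norm_smul, Real.norm_eq_abs]
    have h16 : (2 * ρ / ε) * ε ≤ |t| * ‖y‖ := by
      apply mul_le_mul (le_of_lt hcase) hyn (le_of_lt hε)
      exact abs_nonneg t
    have h17 : (2 * ρ / ε) * ε = 2 * ρ := by field_simp
    nlinarith [norm_nonneg (u + t • y), hρ]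
set_option maxHeartbeats 1000000 in
theorem stmt_16 {X : Type*} [NormedAddCommGroup X] [NormedSpace ℝ X]
    (x : ℕ → X)
    (haoc : ∀ M : Set ℕ, M.Infinite →
      FiniteDimensional ℝ (X ⧸ (Submodule.span ℝ (x '' M)).topologicalClosure))
    (l : X)
    (hweak : ∀ f : X →L[ℝ] ℝ, Tendsto (fun n => f (x n)) atTop (𝓝 (f l))) :
    Tendsto x atTop (𝓝 l) := by
  classical
  by_contra hcon
  rw [Metric.tendsto_atTop] at hcon
  push_neg at hcon
  obtain ⟨ε, hε, hbad⟩ := hcon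
  set S : Set ℕ := {n | ε ≤ ‖x n - l‖} with hSdef
  have hS : S.Infinite := by
    apply Set.infinite_of_forall_exists_gt
    intro N
    obtain ⟨n, hn1, hn2⟩ := hbad (N + 1)
    refine ⟨n, ?_, by omega⟩
    rw [hSdef, Set.mem_setOf_eq, ← dist_eq_norm]
    exact hn2
  have hSx : ∀ n ∈ S, ε ≤ ‖x n - l‖ := fun n hn => hn
  set y : ℕ → X := fun n => x n - l with hy
  set Fm : ℕ → Submodule ℝ X :=
    fun m => Submodule.span ℝ ({l} ∪ y '' Set.Iio (m + 1)) with hFmdef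
  have hFmfd : ∀ m, FiniteDimensional ℝ (Fm m) := fun m =>
    FiniteDimensional.span_of_finite ℝ
      ((Set.finite_singleton l).union ((Set.finite_Iio _).image _))
  set r : ℕ → ℕ → Prop := fun m n => m < n ∧ ∀ u ∈ Fm m, ∀ t : ℝ,
      (1 - (2:ℝ)⁻¹ ^ (m + 2)) * ‖u‖ ≤ ‖u + t • y n‖ with hrdef
  have hstep : ∀ s : Finset ℕ, (∀ m ∈ s, m ∈ S) → ∃ n, n ∈ S ∧ ∀ m ∈ s, r m n := by
    intro s _
    set M := s.sup id with hM
    obtain ⟨n, hnS, hnN, hn⟩ := aux_step x l hweak hε hS hSx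
      (δ := (2:ℝ)⁻¹ ^ (M + 2)) (by positivity)
      (pow_le_one₀ (by norm_num) (by norm_num))
      (Fm M) (hFmfd M) (M + 1)
    refine ⟨n, hnS, fun m hm => ⟨?_, fun u hu t => ?_⟩⟩
    · have := Finset.le_sup (f := id) hm
      simp only [id] at this
      omega
    · have hmM : m ≤ M := by
        have := Finset.le_sup (f := id) hm
        simpa using this
      have huM : u ∈ Fm M := by
        apply Submodule.span_mono _ hu
        apply Set.union_subset_union_right
        apply Set.image_mono
        intro p hp
        simp only [Set.mem_Iio] at hp ⊢
        omega
      have h1 := hn u huM t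
      have h2 : (2:ℝ)⁻¹ ^ (M + 2) ≤ (2:ℝ)⁻¹ ^ (m + 2) :=
        pow_le_pow_of_le_one (by norm_num) (by norm_num) (by omega)
      have := mul_le_mul_of_nonneg_right (by linarith : (1 - (2:ℝ)⁻¹ ^ (m+2)) ≤ (1 - (2:ℝ)⁻¹ ^ (M+2))) (norm_nonneg u)
      linarith
  obtain ⟨f, hfS, hfr⟩ := exists_seq_of_forall_finset_exists (· ∈ S) r hstep
  have hmono : StrictMono f := fun a b h => (hfr a b h).1
  have hfr2 : ∀ a b, a < b → ∀ u ∈ Fm (f a), ∀ t : ℝ,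
      (1 - (2:ℝ)⁻¹ ^ (f a + 2)) * ‖u‖ ≤ ‖u + t • y (f b)‖ :=
    fun a b h => (hfr a b h).2
  have hfle : ∀ p, p ≤ f p := fun p => hmono.le_apply
  set M2 : Set ℕ := Set.range (fun i => f (2 * i)) with hM2def
  have hM2 : M2.Infinite := by
    apply Set.infinite_range_of_injective
    intro a b hab
    have := hmono.injective hab
    omega
  haveI hQfd := haoc M2 hM2
  set Y := (Submodule.span ℝ (x '' M2)).topologicalClosure with hYdef
  haveI : IsClosed (Y : Set X) := Submodule.isClosed_topologicalClosure _
  set π : X →L[ℝ] (X ⧸ Y) := LinearMap.mkContinuous Y.mkQ 1 (fun v => by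
      simpa [one_mul] using Submodule.Quotient.norm_mk_le (S := Y) v) with hπdef
  have hπmk : ∀ v : X, π v = Submodule.Quotient.mk v := fun v => rfl
  have hπw : ∀ g : X ⧸ Y →L[ℝ] ℝ, Tendsto (fun n => g (π (x n))) atTop (𝓝 (g (π l))) :=
    fun g => hweak (g.comp π)
  have hπx : Tendsto (fun n => π (x n)) atTop (𝓝 (π l)) := aux_fd_tendsto _ _ hπw
  have hπ0 : ∀ i : ℕ, π (x (f (2 * i))) = 0 := by
    intro i
    have hxm : x (f (2 * i)) ∈ Y :=
      Submodule.le_topologicalClosure _ (Submodule.subset_span ⟨f (2 * i), ⟨i, rfl⟩, rfl⟩)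
    rw [hπmk]
    exact (Submodule.Quotient.mk_eq_zero Y).2 hxm
  have heven : StrictMono (fun i : ℕ => 2 * i) := fun a b h => by
    simp only []
    omega
  have hsub : Tendsto (fun i => π (x (f (2 * i)))) atTop (𝓝 (π l)) :=
    hπx.comp ((hmono.comp heven).tendsto_atTop)
  have hl0 : π l = 0 := by
    have h1 : Tendsto (fun _ : ℕ => (0 : X ⧸ Y)) atTop (𝓝 (π l)) := by
      have : (fun i => π (x (f (2 * i)))) = fun _ : ℕ => (0 : X ⧸ Y) := by
        funext i; exact hπ0 i
      rwa [this] at hsub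
    exact (tendsto_nhds_unique h1 tendsto_const_nhds)
  have hnorm0 : Tendsto (fun n => ‖π (x n)‖) atTop (𝓝 0) := by
    have h1 := hπx.norm
    rw [hl0, norm_zero] at h1
    exact h1
  have hlb : ∀ j : ℕ, ε / 8 ≤ ‖π (x (f (2 * j + 1)))‖ := by
    intro j
    set v := y (f (2 * j + 1)) with hvdef
    have hvS : f (2 * j + 1) ∈ S := hfS (2 * j + 1)
    have hvε : ε ≤ ‖v‖ := hSx _ hvS
    set Z : ℕ → Set X := fun m =>
      {l} ∪ (fun p => y (f p)) '' {p | Even p ∧ p < m} with hZdef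
    set W : ℕ → Submodule ℝ X := fun m => Submodule.span ℝ (Z m) with hWdef
    set σ : ℕ → ℝ := fun m => ∑ p ∈ Finset.Ico (2 * j + 2) m, (2:ℝ)⁻¹ ^ (p + 1)
      with hσdef
    have hσ0 : ∀ m, 0 ≤ σ m := fun m =>
      Finset.sum_nonneg fun p _ => by positivity
    have hσ4 : ∀ m, σ m ≤ 1 / 4 := by
      intro m
      have h1 : σ m = ∑ i ∈ Finset.range (m - (2 * j + 2)),
          (2:ℝ)⁻¹ ^ ((2 * j + 2) + i + 1) := Finset.sum_Ico_eq_sum_range _ _ _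
      have h3 : ∑ i ∈ Finset.range (m - (2 * j + 2)), (2:ℝ)⁻¹ ^ ((2 * j + 2) + i + 1)
          = (2:ℝ)⁻¹ ^ (2 * j + 3) * ∑ i ∈ Finset.range (m - (2 * j + 2)), (2:ℝ)⁻¹ ^ i := by
        rw [Finset.mul_sum]
        apply Finset.sum_congr rfl
        intro i _
        ring
      have h4 := sum_geometric_two_le (m - (2 * j + 2))
      have h5 : ∑ i ∈ Finset.range (m - (2 * j + 2)), (2:ℝ)⁻¹ ^ i ≤ 2 := by
        simpa [one_div] using h4
      have h6 : (2:ℝ)⁻¹ ^ (2 * j + 3) ≤ (2:ℝ)⁻¹ ^ 3 :=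
        pow_le_pow_of_le_one (by norm_num) (by norm_num) (by omega)
      have h7 : (0:ℝ) ≤ (2:ℝ)⁻¹ ^ (2 * j + 3) := by positivity
      have h8 : (0:ℝ) ≤ ∑ i ∈ Finset.range (m - (2 * j + 2)), (2:ℝ)⁻¹ ^ i :=
        Finset.sum_nonneg fun i _ => by positivity
      rw [h1, h3]
      nlinarith
    have hWF : ∀ a m, (∀ p, Even p → p < m → p ≤ a) → W m ≤ Fm (f a) := by
      intro a m hcond
      apply Submodule.span_mono
      rintro w (hw | ⟨p, ⟨hpe, hpm⟩, rfl⟩)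
      · exact Or.inl hw
      · refine Or.inr ⟨f p, ?_, rfl⟩
        simp only [Set.mem_Iio]
        have := hmono.monotone (hcond p hpe hpm)
        omega
    have hvF : ∀ a, 2 * j + 1 ≤ a → v ∈ Fm (f a) := by
      intro a ha
      apply Submodule.subset_span
      refine Or.inr ⟨f (2 * j + 1), ?_, rfl⟩
      simp only [Set.mem_Iio]
      have := hmono.monotone ha
      omega
    have hbase : ∀ w ∈ W (2 * j + 2), ε / 4 ≤ ‖v - w‖ := by
      intro w hw
      have hwF : w ∈ Fm (f (2 * j)) := hWF (2 * j) (2 * j + 2)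
        (fun p hp hlt => by rw [Nat.even_iff] at hp; omega) hw
      have h1 := hfr2 (2 * j) (2 * j + 1) (by omega) w hwF (-1)
      have h2 : w + (-1 : ℝ) • y (f (2 * j + 1)) = -(v - w) := by
        rw [neg_one_smul, ← hvdef]; abel
      rw [h2, norm_neg] at h1
      have hδ4 : (2:ℝ)⁻¹ ^ (f (2 * j) + 2) ≤ 1 / 4 := by
        calc (2:ℝ)⁻¹ ^ (f (2 * j) + 2) ≤ (2:ℝ)⁻¹ ^ 2 :=
              pow_le_pow_of_le_one (by norm_num) (by norm_num) (by omega)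
          _ = 1 / 4 := by norm_num
      have hδ0' : (0:ℝ) ≤ (2:ℝ)⁻¹ ^ (f (2 * j) + 2) := by positivity
      rcases le_or_gt (ε / 2) ‖w‖ with hcase | hcase
      · nlinarith [norm_nonneg (v - w)]
      · have h3 : ‖v‖ - ‖w‖ ≤ ‖v - w‖ := norm_sub_norm_le v w
        linarith
    have hstep2 : ∀ q, ∀ w ∈ W (2 * j + 2 + q),
        (1 - σ (2 * j + 2 + q)) * (ε / 4) ≤ ‖v - w‖ := by
      intro q
      induction q with
      | zero =>
          intro w hw
          have hσz : σ (2 * j + 2) = 0 := by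
            rw [hσdef]; simp
          rw [show 2 * j + 2 + 0 = 2 * j + 2 from rfl, hσz]
          have := hbase w hw
          linarith
      | succ q ih =>
          intro w hw
          have hσs : σ (2 * j + 2 + (q + 1)) = σ (2 * j + 2 + q) + (2:ℝ)⁻¹ ^ (2 * j + 2 + q + 1) := by
            rw [hσdef]
            rw [show 2 * j + 2 + (q + 1) = (2 * j + 2 + q) + 1 from rfl]
            exact Finset.sum_Ico_succ_top (by omega) _
          set m := 2 * j + 2 + q with hmdef
          have hd1 : (2:ℝ)⁻¹ ^ (f (m - 1) + 2) ≤ (2:ℝ)⁻¹ ^ (m + 1) :=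
            pow_le_pow_of_le_one (by norm_num) (by norm_num)
              (by have := hfle (m - 1); omega)
          have hd0 : (0:ℝ) ≤ (2:ℝ)⁻¹ ^ (f (m - 1) + 2) := by positivity
          have hd2 : (0:ℝ) ≤ (2:ℝ)⁻¹ ^ (m + 1) := by positivity
          have hd3 : (2:ℝ)⁻¹ ^ (m + 1) ≤ 1 := pow_le_one₀ (by norm_num) (by norm_num)
          have hσm0 := hσ0 m
          have hσm4 := hσ4 m
          rcases Nat.even_or_odd m with hme | hmo
          · have hsets : {p : ℕ | Even p ∧ p < m + 1} = insert m {p : ℕ | Even p ∧ p < m} := by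
              ext p
              simp only [Set.mem_setOf_eq, Set.mem_insert_iff]
              rw [Nat.even_iff] at hme ⊢
              constructor
              · rintro ⟨h1, h2⟩
                rcases Nat.lt_succ_iff_lt_or_eq.1 h2 with h3 | h3
                · exact Or.inr ⟨h1, h3⟩
                · exact Or.inl h3
              · rintro (rfl | ⟨h1, h2⟩)
                · exact ⟨hme, by omega⟩
                · exact ⟨h1, by omega⟩
            have hZm : Z (m + 1) = insert (y (f m)) (Z m) := by
              rw [hZdef]
              simp only
              rw [hsets, Set.image_insert_eq, Set.union_insert]
            have hWm : W (m + 1) = (Submodule.span ℝ {y (f m)}) ⊔ W m := by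
              rw [hWdef]
              simp only
              rw [hZm, Submodule.span_insert]
            have hw' : w ∈ (Submodule.span ℝ {y (f m)}) ⊔ W m := by
              rw [← hWm]
              exact hw
            obtain ⟨w1, hw1, w2, hw2, rfl⟩ := Submodule.mem_sup.1 hw'
            obtain ⟨t, rfl⟩ := Submodule.mem_span_singleton.1 hw1
            have hu : v - w2 ∈ Fm (f (m - 1)) := by
              have h1 : v ∈ Fm (f (m - 1)) := hvF (m - 1) (by omega)
              have h2 : w2 ∈ Fm (f (m - 1)) :=
                hWF (m - 1) m (fun p _ hp => by omega) hw2
              exact Submodule.sub_mem _ h1 h2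
            have h1 := hfr2 (m - 1) m (by omega) (v - w2) hu (-t)
            have h2 : (v - w2) + (-t) • y (f m) = v - (t • y (f m) + w2) := by
              rw [neg_smul]; abel
            rw [h2] at h1
            have h3 := ih w2 hw2
            rw [hσs]
            have hδf1 : (2:ℝ)⁻¹ ^ (f (m - 1) + 2) ≤ 1 := le_trans hd1 hd3
            have k1 : (0:ℝ) ≤ 1 - (2:ℝ)⁻¹ ^ (f (m - 1) + 2) := by linarith
            have k2 : (1 - (2:ℝ)⁻¹ ^ (f (m - 1) + 2)) * ((1 - σ m) * (ε / 4)) ≤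
                (1 - (2:ℝ)⁻¹ ^ (f (m - 1) + 2)) * ‖v - w2‖ :=
              mul_le_mul_of_nonneg_left h3 k1
            have k3 : (1 - (σ m + (2:ℝ)⁻¹ ^ (m + 1))) * (ε / 4) ≤
                (1 - (2:ℝ)⁻¹ ^ (f (m - 1) + 2)) * ((1 - σ m) * (ε / 4)) := by
              nlinarith [mul_nonneg (mul_nonneg hd0 hσm0) (le_of_lt hε),
                mul_le_mul_of_nonneg_right hd1 (by linarith : (0:ℝ) ≤ ε / 4)]
            linarith
          · have hsets : {p : ℕ | Even p ∧ p < m + 1} = {p : ℕ | Even p ∧ p < m} := by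
              ext p
              simp only [Set.mem_setOf_eq]
              constructor
              · rintro ⟨h1, h2⟩
                refine ⟨h1, ?_⟩
                rw [Nat.even_iff] at h1
                rw [Nat.odd_iff] at hmo
                omega
              · rintro ⟨h1, h2⟩
                exact ⟨h1, by omega⟩
            have hWm : W (m + 1) = W m := by
              rw [hWdef]
              simp only
              rw [hZdef]
              simp only
              rw [hsets]
            have hw' : w ∈ W m := by rw [← hWm]; exact hw
            have h3 := ih w hw'
            rw [hσs]
            nlinarith [hε]
    have hspan : ∀ w ∈ Submodule.span ℝ (x '' M2), 3 * ε / 16 ≤ ‖v - w‖ := by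
      intro w hw
      have hw2 : w ∈ ⨆ m, W m := by
        rw [← Submodule.span_iUnion]
        apply Submodule.span_le.2 _ hw
        rintro _ ⟨nn, ⟨i, rfl⟩, rfl⟩
        have hl : l ∈ Submodule.span ℝ (⋃ m, Z m) :=
          Submodule.subset_span (Set.mem_iUnion.2 ⟨0, Or.inl rfl⟩)
        have hyi : y (f (2 * i)) ∈ Submodule.span ℝ (⋃ m, Z m) :=
          Submodule.subset_span (Set.mem_iUnion.2
            ⟨2 * i + 1, Or.inr ⟨2 * i, ⟨⟨i, by ring⟩, by omega⟩, rfl⟩⟩)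
        have h1 := Submodule.add_mem _ hl hyi
        have h2 : l + y (f (2 * i)) = x (f (2 * i)) := by
          rw [hy]; simp
        rwa [h2] at h1
      have hWmono : Monotone W := by
        intro a b hab
        apply Submodule.span_mono
        apply Set.union_subset_union_right
        apply Set.image_mono
        intro p hp
        exact ⟨hp.1, lt_of_lt_of_le hp.2 hab⟩
      obtain ⟨m, hm⟩ := (Submodule.mem_iSup_of_directed _ (hWmono.directed_le)).1 hw2
      have hm2 : w ∈ W (2 * j + 2 + m) := hWmono (by omega) hm
      have h1 := hstep2 m w hm2
      have h2 := hσ4 (2 * j + 2 + m)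
      nlinarith
    have hYb : ∀ w ∈ Y, ε / 8 ≤ ‖v - w‖ := by
      intro w hw
      have hw' : w ∈ closure (Submodule.span ℝ (x '' M2) : Set X) := hw
      rcases Metric.mem_closure_iff.1 hw' (ε / 16) (by positivity) with ⟨w', hw'mem, hww'⟩
      have h1 := hspan w' hw'mem
      have h2 : ‖v - w'‖ ≤ ‖v - w‖ + ‖w - w'‖ := by
        have h3 := norm_add_le (v - w) (w - w')
        have h4 : (v - w) + (w - w') = v - w' := by abel
        rwa [h4] at h3
      have h3 : ‖w - w'‖ < ε / 16 := by rwa [dist_eq_norm] at hww'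
      linarith
    have hπv : π (x (f (2 * j + 1))) = Submodule.Quotient.mk v := by
      have h1 : π (x (f (2 * j + 1))) = π (x (f (2 * j + 1))) - π l := by
        rw [hl0, sub_zero]
      rw [h1, ← map_sub]
      exact hπmk _
    rw [hπv]
    by_contra hcon2
    push_neg at hcon2
    have hpos : 0 < ε / 8 - ‖(Submodule.Quotient.mk v : X ⧸ Y)‖ := by linarith
    obtain ⟨mv, hmk, hmlt⟩ :=
      Submodule.Quotient.norm_mk_lt (Submodule.Quotient.mk v : X ⧸ Y) hpos
    have hvm : v - mv ∈ Y := (Submodule.Quotient.eq Y).1 hmk.symm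
    have h1 := hYb (v - mv) hvm
    have h2 : v - (v - mv) = mv := by abel
    rw [h2] at h1
    linarith
  have hodd : StrictMono (fun i : ℕ => 2 * i + 1) := fun a b h => by
    simp only []
    omega
  have hod : Tendsto (fun j => ‖π (x (f (2 * j + 1)))‖) atTop (𝓝 0) :=
    hnorm0.comp ((hmono.comp hodd).tendsto_atTop)
  obtain ⟨j, hj⟩ := (hod.eventually (gt_mem_nhds (show (0:ℝ) < ε / 8 by positivity))).exists
  exact absurd (hlb j) (not_le.2 hj)
end

section
/- Every bounded overcomplete sequence in a Banach space is relatively norm compact, and consequently an overcomplete set in a non-separable Banach space is never relatively norm compact. -/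
open Cardinal


section

open Metric Set

lemma exists_separated {X : Type*} [PseudoMetricSpace X] (x : ℕ → X)
    (h : ¬ TotallyBounded (Set.range x)) :
    ∃ ε > 0, ∃ g : ℕ → ℕ, Function.Injective g ∧
      ∀ i j, i ≠ j → ε ≤ dist (x (g i)) (x (g j)) := by
  rw [Metric.totallyBounded_iff] at h
  push_neg at h
  obtain ⟨ε, hε, h⟩ := h
  have hnext : ∀ l : List ℕ, ∃ n : ℕ, ∀ i ∈ l, ε ≤ dist (x n) (x i) := by
    intro l
    have hfin : (x '' {m | m ∈ l}).Finite := (l.finite_toSet.image x)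
    have hns := h _ hfin
    rw [Set.not_subset] at hns
    obtain ⟨a, ⟨n, rfl⟩, hna⟩ := hns
    refine ⟨n, fun i hi => ?_⟩
    by_contra hlt
    push_neg at hlt
    exact hna (Set.mem_biUnion ⟨i, hi, rfl⟩ (by simpa [Metric.mem_ball] using hlt))
  choose next hnextspec using hnext
  let hist : ℕ → List ℕ := fun k => Nat.rec [] (fun _ l => l ++ [next l]) k
  set g : ℕ → ℕ := fun k => next (hist k) with hg
  have hist_succ : ∀ k, hist (k + 1) = hist k ++ [g k] := fun k => rfl
  have hmem : ∀ k i, i < k → g i ∈ hist k := by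
    intro k
    induction k with
    | zero => omega
    | succ k ih =>
      intro i hi
      rw [hist_succ]
      rcases Nat.lt_succ_iff_lt_or_eq.mp hi with h' | rfl
      · exact List.mem_append_left _ (ih i h')
      · exact List.mem_append_right _ (List.mem_singleton_self _)
  have hsep : ∀ i j, i < j → ε ≤ dist (x (g j)) (x (g i)) := by
    intro i j hij
    exact hnextspec (hist j) (g i) (hmem j i hij)
  have hsep' : ∀ i j, i ≠ j → ε ≤ dist (x (g i)) (x (g j)) := by
    intro i j hij
    rcases hij.lt_or_gt with h' | h'
    · rw [dist_comm]; exact hsep i j h'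
    · exact hsep j i h'
  refine ⟨ε, hε, g, ?_, hsep'⟩
  intro i j hij
  by_contra hne
  have := hsep' i j hne
  rw [hij, dist_self] at this
  linarith

end

section

open Metric Set

variable {W : Type*} [NormedAddCommGroup W] [NormedSpace ℝ W]

lemma norming (φ : StrongDual ℝ W) (hφ : ‖φ‖ = 1) {δ : ℝ} (hδ : 0 < δ) (hδ1 : δ < 1) :
    ∃ f : W, ‖f‖ ≤ 1 ∧ 1 - δ ≤ φ f := by
  by_contra hc
  push_neg at hc
  have hb : ‖φ‖ ≤ 1 - δ := by
    refine φ.opNorm_le_bound (by linarith) (fun f => ?_)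
    rcases eq_or_ne f 0 with rfl | hf0
    · simp
    · have hfpos : 0 < ‖f‖ := norm_pos_iff.mpr hf0
      have h1 : ∀ u : W, ‖u‖ ≤ 1 → φ u < 1 - δ := hc
      have hu : ‖‖f‖⁻¹ • f‖ ≤ 1 := by
        rw [norm_smul, norm_inv, norm_norm, inv_mul_cancel₀ hfpos.ne']
      have hu' : ‖-(‖f‖⁻¹ • f)‖ ≤ 1 := by rwa [norm_neg]
      have e1 := h1 _ hu
      have e2 := h1 _ hu'
      rw [map_neg] at e2
      have : |φ (‖f‖⁻¹ • f)| ≤ 1 - δ := by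
        rw [abs_le]; constructor <;> linarith
      rw [map_smul, smul_eq_mul, abs_mul, abs_inv, abs_norm] at this
      rw [Real.norm_eq_abs]
      calc |φ f| = ‖f‖ * (‖f‖⁻¹ * |φ f|) := by field_simp
        _ ≤ ‖f‖ * (1 - δ) := by
            exact mul_le_mul_of_nonneg_left this hfpos.le
        _ = (1 - δ) * ‖f‖ := by ring
  rw [hφ] at hb; linarith

set_option maxHeartbeats 1000000 in
lemma guard_exists (F : Submodule ℝ (StrongDual ℝ W)) (hF : FiniteDimensional ℝ F)
    {θ ε' : ℝ} (hθ : 0 < θ) (hθ1 : θ ≤ 1/4) (hε' : 0 < ε') :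
    ∃ G : Finset W, (∀ f ∈ G, ‖f‖ ≤ 1) ∧
      ∀ v : StrongDual ℝ W, ε' ≤ ‖v‖ → (∀ f ∈ G, |v f| ≤ θ * ε' / 8) →
        ∀ w ∈ F, ∀ t : ℝ, (1 - θ) * ‖w‖ ≤ ‖w + t • v‖ := by
  classical
  haveI := hF
  set S : Set (StrongDual ℝ W) := Subtype.val '' (Metric.sphere (0 : F) 1) with hS
  have hcS : IsCompact S := (isCompact_sphere (0 : F) 1).image continuous_subtype_val
  obtain ⟨net, hnet_sub, hnet_fin, hcover⟩ := hcS.finite_cover_balls (show 0 < θ/2 by linarith)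
  have hnorm1 : ∀ z ∈ net, ‖z‖ = 1 := by
    intro z hz
    obtain ⟨w, hw, rfl⟩ := hnet_sub hz
    rw [Metric.mem_sphere] at hw
    exact (dist_zero_right (w : StrongDual ℝ W)).symm.trans hw
  set fsel : StrongDual ℝ W → W := fun z =>
    if h : ∃ f : W, ‖f‖ ≤ 1 ∧ 1 - θ/4 ≤ z f then h.choose else 0 with hfsel
  have hfsel1 : ∀ z, ‖fsel z‖ ≤ 1 := by
    intro z
    rw [hfsel]
    dsimp only
    split
    next h => exact h.choose_spec.1
    next => simp
  have hfsel2 : ∀ z ∈ net, 1 - θ/4 ≤ z (fsel z) := by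
    intro z hz
    have hex : ∃ f : W, ‖f‖ ≤ 1 ∧ 1 - θ/4 ≤ z f :=
      norming z (hnorm1 z hz) (by linarith) (by linarith)
    rw [hfsel]
    dsimp only
    rw [dif_pos hex]
    exact hex.choose_spec.2
  refine ⟨hnet_fin.toFinset.image fsel, ?_, ?_⟩
  · intro f hf
    simp only [Finset.mem_image] at hf
    obtain ⟨z, _, rfl⟩ := hf
    exact hfsel1 z
  · intro v hv1 hv2 w hw t
    rcases eq_or_ne w 0 with rfl | hw0
    · simp
    have hc : 0 < ‖w‖ := norm_pos_iff.mpr hw0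
    set c := ‖w‖ with hcdef
    -- find net point near w/c
    have hwS : c⁻¹ • w ∈ S := by
      refine ⟨c⁻¹ • ⟨w, hw⟩, ?_, rfl⟩
      have hnn : ‖(c⁻¹ • (⟨w, hw⟩ : F) : F)‖ = ‖c⁻¹ • w‖ := rfl
      rw [Metric.mem_sphere]
      have e : dist (c⁻¹ • (⟨w, hw⟩ : F)) 0 = ‖c⁻¹ • w‖ := dist_zero_right (c⁻¹ • w)
      rw [e]
      rw [norm_smul, Real.norm_eq_abs, abs_inv, abs_norm]
      exact inv_mul_cancel₀ hc.ne'
    obtain ⟨z, hz, hzball⟩ := Set.mem_iUnion₂.mp (hcover hwS)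
    have hznear : ‖c⁻¹ • w - z‖ < θ/2 := by
      rw [mem_ball] at hzball
      rw [← dist_eq_norm]
      exact hzball
    have hfex : ∃ f : W, ‖f‖ ≤ 1 ∧ (1 - θ/4 ≤ z f) ∧ |v f| ≤ θ * ε' / 8 := by
      refine ⟨fsel z, hfsel1 z, hfsel2 z hz, ?_⟩
      refine hv2 (fsel z) ?_
      simp only [Finset.mem_image, Set.Finite.mem_toFinset]
      exact ⟨z, hz, rfl⟩
    obtain ⟨f, hf1, hf2, hf3⟩ := hfex
    clear_value c
    rcases le_or_gt (2 * c) (|t| * ‖v‖) with hbig | hsmall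
    · have e : t • v = (w + t • v) + (-w) := by abel
      have h1 : ‖t • v‖ ≤ ‖w + t • v‖ + ‖w‖ := by
        conv_lhs => rw [e]
        calc ‖(w + t • v) + (-w)‖ ≤ ‖w + t • v‖ + ‖-w‖ := norm_add_le _ _
          _ = ‖w + t • v‖ + ‖w‖ := by rw [norm_neg]
      rw [norm_smul, Real.norm_eq_abs] at h1
      nlinarith [norm_nonneg (w + t • v), hθ.le]
    · have ht : |t| * ε' ≤ 2 * c := le_of_lt (lt_of_le_of_lt (by
        exact mul_le_mul_of_nonneg_left hv1 (abs_nonneg t)) hsmall)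
      -- evaluate at f
      have hwf : c * (1 - θ/4 - θ/2) ≤ w f := by
        have e1 : |(c⁻¹ • w - z) f| ≤ ‖c⁻¹ • w - z‖ * ‖f‖ := (c⁻¹ • w - z).le_opNorm f
        have e2 : ‖c⁻¹ • w - z‖ * ‖f‖ ≤ θ/2 := by
          nlinarith [norm_nonneg (c⁻¹ • w - z), norm_nonneg f]
        have e3 : (c⁻¹ • w) f = z f + (c⁻¹ • w - z) f := by
          rw [ContinuousLinearMap.sub_apply]; ring
        have e4 : 1 - θ/4 - θ/2 ≤ (c⁻¹ • w) f := by
          have := (abs_le.mp (e1.trans e2)).1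
          rw [e3]; linarith
        have e5 : (c⁻¹ • w) f = c⁻¹ * w f := by
          rw [ContinuousLinearMap.smul_apply, smul_eq_mul]
        rw [e5] at e4
        calc c * (1 - θ/4 - θ/2) ≤ c * (c⁻¹ * w f) :=
            mul_le_mul_of_nonneg_left e4 hc.le
          _ = w f := by rw [← mul_assoc, mul_inv_cancel₀ hc.ne', one_mul]
      have htv : |t * v f| ≤ c * (θ/4) := by
        rw [abs_mul]
        calc |t| * |v f| ≤ |t| * (θ * ε' / 8) :=
            mul_le_mul_of_nonneg_left hf3 (abs_nonneg t)
          _ = (|t| * ε') * (θ/8) := by ring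
          _ ≤ (2*c) * (θ/8) := by
              apply mul_le_mul_of_nonneg_right ht (by linarith)
          _ = c * (θ/4) := by ring
      have heval : c * (1 - θ) ≤ (w + t • v) f := by
        have : (w + t • v) f = w f + t * v f := by
          simp [ContinuousLinearMap.add_apply]
        rw [this]
        have := (abs_le.mp htv).1
        nlinarith
      have hfin : (w + t • v) f ≤ ‖w + t • v‖ := by
        have h1 : |(w + t • v) f| ≤ ‖w + t • v‖ * ‖f‖ := (w + t • v).le_opNorm f
        have h2 : ‖w + t • v‖ * ‖f‖ ≤ ‖w + t • v‖ * 1 :=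
          mul_le_mul_of_nonneg_left hf1 (norm_nonneg _)
        calc (w + t • v) f ≤ |(w + t • v) f| := le_abs_self _
          _ ≤ ‖w + t • v‖ := by linarith
      calc (1 - θ) * c = c * (1 - θ) := by ring
        _ ≤ ‖w + t • v‖ := heval.trans hfin

end

section

open Filter Topology

variable {X : Type*} [NormedAddCommGroup X] [NormedSpace ℝ X]

lemma exists_ulim (y : ℕ → X) (R : ℝ) (hR : ∀ n, ‖y n‖ ≤ R) :
    ∃ p : StrongDual ℝ (StrongDual ℝ X),
      ∀ f : StrongDual ℝ X,
        Filter.Tendsto (fun n => f (y n)) (Filter.hyperfilter ℕ) (𝓝 (p f)) := by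
  have hR0 : 0 ≤ R := le_trans (norm_nonneg (y 0)) (hR 0)
  have hlim : ∀ f : StrongDual ℝ X, ∃ r : ℝ, |r| ≤ R * ‖f‖ ∧
      Filter.Tendsto (fun n => f (y n)) (Filter.hyperfilter ℕ) (𝓝 r) := by
    intro f
    have hmem : ∀ n, f (y n) ∈ Set.Icc (-(R * ‖f‖)) (R * ‖f‖) := by
      intro n
      have h1 : |f (y n)| ≤ R * ‖f‖ := by
        have := f.le_opNorm (y n)
        rw [← Real.norm_eq_abs]
        calc ‖f (y n)‖ ≤ ‖f‖ * ‖y n‖ := this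
          _ ≤ ‖f‖ * R := mul_le_mul_of_nonneg_left (hR n) (norm_nonneg f)
          _ = R * ‖f‖ := mul_comm _ _
      exact abs_le.mp h1 |>.imp (fun h => h) (fun h => h) |> fun h => ⟨h.1, h.2⟩
    have hle : ↑((Filter.hyperfilter ℕ).map (fun n => f (y n))) ≤
        Filter.principal (Set.Icc (-(R * ‖f‖)) (R * ‖f‖)) := by
      rw [Ultrafilter.coe_map]
      rw [Filter.le_principal_iff, Filter.mem_map]
      exact Filter.univ_mem' hmem
    obtain ⟨r, hrmem, hrle⟩ := (isCompact_Icc).ultrafilter_le_nhds _ hle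
    refine ⟨r, ?_, ?_⟩
    · rw [abs_le]; exact ⟨hrmem.1, hrmem.2⟩
    · rw [Filter.Tendsto, ← Ultrafilter.coe_map]; exact hrle
  choose lim hlimb hlimt using hlim
  have hadd : ∀ f g, lim (f + g) = lim f + lim g := by
    intro f g
    have h1 : Filter.Tendsto (fun n => (f + g) (y n)) (Filter.hyperfilter ℕ)
        (𝓝 (lim f + lim g)) := by
      have := (hlimt f).add (hlimt g)
      simpa [ContinuousLinearMap.add_apply] using this
    exact tendsto_nhds_unique (hlimt (f + g)) h1
  have hsmul : ∀ (c : ℝ) f, lim (c • f) = c * lim f := by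
    intro c f
    have h1 : Filter.Tendsto (fun n => (c • f) (y n)) (Filter.hyperfilter ℕ)
        (𝓝 (c * lim f)) := by
      have := (hlimt f).const_mul c
      simpa [ContinuousLinearMap.smul_apply, smul_eq_mul] using this
    exact tendsto_nhds_unique (hlimt (c • f)) h1
  let L : StrongDual ℝ X →ₗ[ℝ] ℝ :=
    { toFun := lim
      map_add' := hadd
      map_smul' := fun c f => by simpa [smul_eq_mul] using hsmul c f }
  refine ⟨L.mkContinuous R (fun f => ?_), fun f => hlimt f⟩
  rw [Real.norm_eq_abs]
  exact hlimb f

end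

section

open Finset

lemma prod_one_sub_ge (s : Finset ℕ) (f : ℕ → ℝ) (h0 : ∀ i ∈ s, 0 ≤ f i)
    (h1 : ∀ i ∈ s, f i ≤ 1) :
    1 - ∑ i ∈ s, f i ≤ ∏ i ∈ s, (1 - f i) := by
  induction s using Finset.cons_induction with
  | empty => simp
  | cons a s ha ih =>
    rw [Finset.prod_cons, Finset.sum_cons]
    have hs : 0 ≤ ∑ i ∈ s, f i :=
      Finset.sum_nonneg (fun i hi => h0 i (Finset.mem_cons_of_mem hi))
    have iha := ih (fun i hi => h0 i (Finset.mem_cons_of_mem hi))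
      (fun i hi => h1 i (Finset.mem_cons_of_mem hi))
    have ha0 := h0 a (Finset.mem_cons_self a s)
    have ha1 := h1 a (Finset.mem_cons_self a s)
    have k1 : (1 - f a) * (1 - ∑ i ∈ s, f i) ≤ (1 - f a) * ∏ i ∈ s, (1 - f i) :=
      mul_le_mul_of_nonneg_left iha (by linarith)
    nlinarith [mul_nonneg ha0 hs]

lemma theta_sum_le (s : Finset ℕ) : ∑ i ∈ s, ((1:ℝ)/4)^(i+1) ≤ 1/3 := by
  obtain ⟨N, hN⟩ : ∃ N, ∀ i ∈ s, i < N := ⟨(s.sup id) + 1, fun i hi =>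
    Nat.lt_succ_of_le (Finset.le_sup (f := id) hi)⟩
  have h1 : ∑ i ∈ s, ((1:ℝ)/4)^(i+1) ≤ ∑ i ∈ Finset.range N, ((1:ℝ)/4)^(i+1) := by
    apply Finset.sum_le_sum_of_subset_of_nonneg
    · intro i hi; exact Finset.mem_range.mpr (hN i hi)
    · intro i _ _; positivity
  have h2 : ∑ i ∈ Finset.range N, ((1:ℝ)/4)^(i+1)
      = (1/4) * ∑ i ∈ Finset.range N, ((1:ℝ)/4)^i := by
    rw [Finset.mul_sum]
    exact Finset.sum_congr rfl (fun i _ => by ring)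
  have h3 : ∑ i ∈ Finset.range N, ((1:ℝ)/4)^i ≤ 4/3 := by
    rw [geom_sum_eq (by norm_num : (1:ℝ)/4 ≠ 1)]
    have hp : (0:ℝ) ≤ (1/4)^N := by positivity
    have he : (((1:ℝ)/4)^N - 1) / ((1:ℝ)/4 - 1) = (1 - (1/4)^N) * (4/3) := by ring
    rw [he]
    nlinarith
  nlinarith [h1, h2, h3]

variable {E : Type*} [NormedAddCommGroup E] [NormedSpace ℝ E]

lemma coeff_bound (v : ℕ → E) (ε' : ℝ) (hε' : 0 < ε') (hlow : ∀ k, ε' ≤ ‖v k‖)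
    (hstep : ∀ k, ∀ w ∈ Submodule.span ℝ (v '' Set.Iio k), ∀ t : ℝ,
        (1 - (1/4:ℝ)^(k+1)) * ‖w‖ ≤ ‖w + t • v k‖) :
    ∀ (s : Finset ℕ) (a : ℕ → ℝ), ∀ j ∈ s, |a j| * ε' ≤ 3 * ‖∑ i ∈ s, a i • v i‖ := by
  intro s a j hj
  classical
  set T : ℕ → E := fun k => ∑ i ∈ s.filter (· < k), a i • v i with hTdef
  have hT : ∀ k, T (k+1) = T k + (if k ∈ s then a k • v k else 0) := by
    intro k
    rw [hTdef]
    simp only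
    rw [Finset.sum_filter, Finset.sum_filter]
    have : ∀ i ∈ s, (if i < k + 1 then a i • v i else 0)
        = (if i < k then a i • v i else 0) + (if i = k then a i • v i else 0) := by
      intro i _
      by_cases h1 : i < k
      · rw [if_pos (by omega), if_pos h1, if_neg (by omega), add_zero]
      · by_cases h2 : i = k
        · rw [if_pos (by omega), if_neg h1, if_pos h2, zero_add]
        · rw [if_neg (by omega), if_neg h1, if_neg h2, add_zero]
    rw [Finset.sum_congr rfl this, Finset.sum_add_distrib]
    congr 1
    exact Finset.sum_ite_eq' s k (fun i => a i • v i)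
  have hTmem : ∀ k, T k ∈ Submodule.span ℝ (v '' Set.Iio k) := by
    intro k
    apply Submodule.sum_mem
    intro i hi
    obtain ⟨-, hik⟩ := Finset.mem_filter.mp hi
    exact Submodule.smul_mem _ _ (Submodule.subset_span ⟨i, hik, rfl⟩)
  have hθpos : ∀ k : ℕ, 0 < ((1:ℝ)/4)^(k+1) := fun k => by positivity
  have hθle : ∀ k : ℕ, ((1:ℝ)/4)^(k+1) ≤ 1/4 := by
    intro k
    calc ((1:ℝ)/4)^(k+1) ≤ ((1:ℝ)/4)^1 :=
        pow_le_pow_of_le_one (by norm_num) (by norm_num) (by omega)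
      _ = 1/4 := pow_one _
  have hkey : ∀ k, (1 - ((1:ℝ)/4)^(k+1)) * ‖T k‖ ≤ ‖T (k+1)‖ := by
    intro k
    by_cases hks : k ∈ s
    · rw [hT k, if_pos hks]
      exact hstep k (T k) (hTmem k) (a k)
    · rw [hT k, if_neg hks, add_zero]
      have h1 := hθpos k
      nlinarith [norm_nonneg (T k)]
  have hchain : ∀ m k, m ≤ k → (2/3 : ℝ) * ‖T m‖ ≤ ‖T k‖ := by
    intro m k hmk
    have hprod : ∀ k', m ≤ k' →
        (∏ i ∈ Finset.Ico m k', (1 - ((1:ℝ)/4)^(i+1))) * ‖T m‖ ≤ ‖T k'‖ := by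
      intro k' hk'
      induction k' , hk' using Nat.le_induction with
      | base => simp
      | succ k' hk' ih =>
        rw [Finset.prod_Ico_succ_top hk']
        calc (∏ i ∈ Finset.Ico m k', (1 - ((1:ℝ)/4)^(i+1))) * (1 - ((1:ℝ)/4)^(k'+1)) * ‖T m‖
            = (1 - ((1:ℝ)/4)^(k'+1)) * ((∏ i ∈ Finset.Ico m k', (1 - ((1:ℝ)/4)^(i+1))) * ‖T m‖) := by ring
          _ ≤ (1 - ((1:ℝ)/4)^(k'+1)) * ‖T k'‖ := by
              apply mul_le_mul_of_nonneg_left ih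
              have := hθle k'; linarith
          _ ≤ ‖T (k'+1)‖ := hkey k'
    have h23 : (2/3 : ℝ) ≤ ∏ i ∈ Finset.Ico m k, (1 - ((1:ℝ)/4)^(i+1)) := by
      have := prod_one_sub_ge (Finset.Ico m k) (fun i => ((1:ℝ)/4)^(i+1))
        (fun i _ => (hθpos i).le) (fun i _ => by linarith [hθle i])
      have hsum := theta_sum_le (Finset.Ico m k)
      linarith
    calc (2/3 : ℝ) * ‖T m‖ ≤ (∏ i ∈ Finset.Ico m k, (1 - ((1:ℝ)/4)^(i+1))) * ‖T m‖ :=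
        mul_le_mul_of_nonneg_right h23 (norm_nonneg _)
      _ ≤ ‖T k‖ := hprod k hmk
  obtain ⟨K, hK⟩ : ∃ K, ∀ i ∈ s, i < K := ⟨(s.sup id) + 1, fun i hi =>
    Nat.lt_succ_of_le (Finset.le_sup (f := id) hi)⟩
  have hTK : T K = ∑ i ∈ s, a i • v i := by
    rw [hTdef]
    simp only
    rw [Finset.filter_true_of_mem (fun i hi => hK i hi)]
  have hjK : j < K := hK j hj
  have h1 : (2/3 : ℝ) * ‖T j‖ ≤ ‖T K‖ := hchain j K hjK.le
  have h2 : (2/3 : ℝ) * ‖T (j+1)‖ ≤ ‖T K‖ := hchain (j+1) K hjK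
  have h3 : T (j+1) = T j + a j • v j := by rw [hT j, if_pos hj]
  have h4 : ‖a j • v j‖ ≤ ‖T (j+1)‖ + ‖T j‖ := by
    have : a j • v j = T (j+1) - T j := by rw [h3]; abel
    rw [this]
    exact norm_sub_le _ _
  have h5 : |a j| * ε' ≤ ‖a j • v j‖ := by
    rw [norm_smul, Real.norm_eq_abs]
    exact mul_le_mul_of_nonneg_left (hlow j) (abs_nonneg _)
  rw [hTK] at h1 h2
  calc |a j| * ε' ≤ ‖a j • v j‖ := h5
    _ ≤ ‖T (j+1)‖ + ‖T j‖ := h4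
    _ ≤ 3 * ‖∑ i ∈ s, a i • v i‖ := by
        have e1 : ‖T (j+1)‖ ≤ (3/2) * ‖∑ i ∈ s, a i • v i‖ := by linarith
        have e2 : ‖T j‖ ≤ (3/2) * ‖∑ i ∈ s, a i • v i‖ := by linarith
        linarith

lemma rep_span (v : ℕ → E) (A : Set ℕ) :
    ∀ u ∈ Submodule.span ℝ (v '' A), ∃ s : Finset ℕ, ↑s ⊆ A ∧
      ∃ a : ℕ → ℝ, u = ∑ i ∈ s, a i • v i := by
  intro u hu
  classical
  induction hu using Submodule.span_induction with
  | mem x hx =>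
    obtain ⟨n, hn, rfl⟩ := hx
    exact ⟨{n}, by simpa using hn, fun _ => 1, by simp⟩
  | zero => exact ⟨∅, by simp, fun _ => 0, by simp⟩
  | add x y _ _ ihx ihy =>
    obtain ⟨s₁, hs₁, a, rfl⟩ := ihx
    obtain ⟨s₂, hs₂, b, rfl⟩ := ihy
    refine ⟨s₁ ∪ s₂, ?_, fun i => (if i ∈ s₁ then a i else 0) + (if i ∈ s₂ then b i else 0), ?_⟩
    · intro i hi
      rcases Finset.mem_union.mp (by exact_mod_cast hi) with h | h
      · exact hs₁ (by exact_mod_cast h)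
      · exact hs₂ (by exact_mod_cast h)
    · have key : ∀ (c : ℕ → ℝ) (t : Finset ℕ), t ⊆ s₁ ∪ s₂ →
          ∑ i ∈ s₁ ∪ s₂, (if i ∈ t then c i • v i else 0) = ∑ i ∈ t, c i • v i := by
        intro c t ht
        rw [← Finset.sum_filter, Finset.filter_mem_eq_inter, Finset.inter_eq_right.mpr ht]
      have e : ∑ i ∈ s₁ ∪ s₂, ((if i ∈ s₁ then a i else 0) + (if i ∈ s₂ then b i else 0)) • v i
          = ∑ i ∈ s₁ ∪ s₂, (if i ∈ s₁ then a i • v i else 0)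
            + ∑ i ∈ s₁ ∪ s₂, (if i ∈ s₂ then b i • v i else 0) := by
        rw [← Finset.sum_add_distrib]
        apply Finset.sum_congr rfl
        intro i _
        split_ifs <;> simp [add_smul]
      rw [e, key a s₁ Finset.subset_union_left, key b s₂ Finset.subset_union_right]
  | smul r x _ ihx =>
    obtain ⟨s, hs, a, rfl⟩ := ihx
    refine ⟨s, hs, fun i => r * a i, ?_⟩
    rw [Finset.smul_sum]
    exact Finset.sum_congr rfl (fun i _ => by rw [smul_smul])

lemma dist_lemma (v : ℕ → E) (ε' : ℝ) (hε' : 0 < ε')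
    (hCb : ∀ (s : Finset ℕ) (a : ℕ → ℝ), ∀ j ∈ s, |a j| * ε' ≤ 3 * ‖∑ i ∈ s, a i • v i‖)
    (A : Set ℕ) (j : ℕ) (hj : j ∉ A) :
    v j ∉ closure (Submodule.span ℝ (v '' A) : Set E) := by
  classical
  intro hmem
  obtain ⟨q, hq, hqd⟩ := Metric.mem_closure_iff.mp hmem (ε'/6) (by positivity)
  obtain ⟨s, hs, a, rfl⟩ := rep_span v A q hq
  have hjs : j ∉ s := fun h => hj (hs h)
  set b : ℕ → ℝ := fun i => if i = j then 1 else -a i with hbdef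
  have hsum : ∑ i ∈ insert j s, b i • v i = v j - ∑ i ∈ s, a i • v i := by
    rw [Finset.sum_insert hjs]
    have h1 : b j = 1 := by rw [hbdef]; simp
    have h2 : ∑ i ∈ s, b i • v i = -∑ i ∈ s, a i • v i := by
      rw [← Finset.sum_neg_distrib]
      apply Finset.sum_congr rfl
      intro i hi
      have : i ≠ j := fun h => hjs (h ▸ hi)
      rw [hbdef]; simp [this, neg_smul]
    rw [h1, h2, one_smul]
    abel
  have hb := hCb (insert j s) b j (Finset.mem_insert_self j s)
  rw [hsum] at hb
  have hbj : |b j| = 1 := by rw [hbdef]; simp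
  rw [hbj, one_mul] at hb
  rw [dist_eq_norm] at hqd
  linarith

end
section
variable {X : Type*} [NormedAddCommGroup X] [NormedSpace ℝ X]
noncomputable instance ddNACG : NormedAddCommGroup (StrongDual ℝ (StrongDual ℝ X)) := inferInstance
noncomputable instance ddSACG : SeminormedAddCommGroup (StrongDual ℝ (StrongDual ℝ X)) := inferInstance
noncomputable instance ddSAG : SeminormedAddGroup (StrongDual ℝ (StrongDual ℝ X)) := inferInstance
noncomputable instance ddACG : AddCommGroup (StrongDual ℝ (StrongDual ℝ X)) := inferInstance
noncomputable instance ddAG : AddGroup (StrongDual ℝ (StrongDual ℝ X)) := inferInstance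
noncomputable instance ddNS : NormedSpace ℝ (StrongDual ℝ (StrongDual ℝ X)) := inferInstance
noncomputable instance ddCA : ContinuousAdd (StrongDual ℝ (StrongDual ℝ X)) := by
  have := (inferInstance : IsTopologicalAddGroup (StrongDual ℝ (StrongDual ℝ X)))
  exact this.toContinuousAdd
noncomputable instance ddFU : FrechetUrysohnSpace (StrongDual ℝ (StrongDual ℝ X)) := by
  let m : PseudoMetricSpace (StrongDual ℝ (StrongDual ℝ X)) := inferInstance
  exact @FirstCountableTopology.frechetUrysohnSpace _ m.toUniformSpace.toTopologicalSpace inferInstance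
end
section
open Filter Topology Set

variable {X : Type*} [NormedAddCommGroup X] [NormedSpace ℝ X]

lemma core_selection (y : ℕ → X) (ε R : ℝ) (hε : 0 < ε)
    (hsep : ∀ i j, i ≠ j → ε ≤ ‖y i - y j‖) (hR : ∀ n, ‖y n‖ ≤ R) :
    ∃ (p : StrongDual ℝ (StrongDual ℝ X)) (σ : ℕ → ℕ),
      Function.Injective σ ∧
      (∀ k, ε/8 ≤ ‖(NormedSpace.inclusionInDoubleDualLi ℝ (E := X)) (y (σ k)) - p‖) ∧
      (∀ k, ∀ w ∈ Submodule.span ℝ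
          ((fun i => (NormedSpace.inclusionInDoubleDualLi ℝ (E := X)) (y (σ i)) - p) '' Set.Iio k),
        ∀ t : ℝ, (1 - (1/4:ℝ)^(k+1)) * ‖w‖
          ≤ ‖w + t • ((NormedSpace.inclusionInDoubleDualLi ℝ (E := X)) (y (σ k)) - p)‖) := by
  classical
  obtain ⟨p, hp⟩ := exists_ulim y R hR
  set Jm := (NormedSpace.inclusionInDoubleDualLi ℝ (E := X)) with hJm
  set u : ℕ → StrongDual ℝ (StrongDual ℝ X) := fun n => Jm (y n) - p with hu
  have hufn : ∀ n f, u n f = f (y n) - p f := by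
    intro n f
    rw [hu]
    simp only [ContinuousLinearMap.sub_apply]
    rfl
  have hbad : ∃ bad : Set ℕ, bad.Finite ∧ ∀ n ∉ bad, ε/8 ≤ ‖u n‖ := by
    by_cases hc : ∃ q : X, ‖p - Jm q‖ < ε/8
    · obtain ⟨q, hq⟩ := hc
      refine ⟨{n | ‖y n - q‖ < ε/2}, ?_, ?_⟩
      · have hss : {n | ‖y n - q‖ < ε/2}.Subsingleton := by
          intro n hn m hm
          by_contra hnm
          have h1 := hsep n m hnm
          have h2 : ‖y n - y m‖ ≤ ‖y n - q‖ + ‖q - y m‖ := by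
            have e : y n - y m = (y n - q) + (q - y m) := by abel
            rw [e]; exact norm_add_le _ _
          rw [norm_sub_rev q (y m)] at h2
          simp only [Set.mem_setOf_eq] at hn hm
          linarith
        exact hss.finite
      · intro n hn
        simp only [Set.mem_setOf_eq, not_lt] at hn
        have h2 : ‖Jm (y n) - Jm q‖ = ‖y n - q‖ := by
          rw [← LinearIsometry.map_sub, LinearIsometry.norm_map]
        have h3 : ‖Jm (y n) - Jm q‖ ≤ ‖Jm (y n) - p‖ + ‖p - Jm q‖ := by
          have e : Jm (y n) - Jm q = (Jm (y n) - p) + (p - Jm q) := by abel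
          rw [e]; exact norm_add_le _ _
        have h4 : ‖u n‖ = ‖Jm (y n) - p‖ := by rw [hu]
        rw [h4]
        rw [h2] at h3
        linarith
    · push_neg at hc
      refine ⟨∅, Set.finite_empty, fun n _ => ?_⟩
      have h5 := hc (y n)
      calc ε/8 ≤ ‖p - Jm (y n)‖ := h5
        _ = ‖Jm (y n) - p‖ := norm_sub_rev _ _
        _ = ‖u n‖ := by rw [hu]
  obtain ⟨bad, hbadfin, hbadlow⟩ := hbad
  have hFD : ∀ l : List ℕ, FiniteDimensional ℝ (Submodule.span ℝ (u '' {n | n ∈ l})) :=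
    fun l => FiniteDimensional.span_of_finite ℝ (l.finite_toSet.image u)
  have hθpos : ∀ k:ℕ, (0:ℝ) < (1/4)^(k+1) := fun k => by positivity
  have hθle : ∀ k:ℕ, ((1:ℝ)/4)^(k+1) ≤ 1/4 := fun k => by
    calc ((1:ℝ)/4)^(k+1) ≤ ((1:ℝ)/4)^1 :=
        pow_le_pow_of_le_one (by norm_num) (by norm_num) (by omega)
      _ = 1/4 := pow_one _
  have hG : ∀ l : List ℕ, ∃ G : Finset (StrongDual ℝ X), (∀ f ∈ G, ‖f‖ ≤ 1) ∧
      ∀ v : StrongDual ℝ (StrongDual ℝ X),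
        ε/8 ≤ ‖v‖ → (∀ f ∈ G, |v f| ≤ (1/4:ℝ)^(l.length+1) * (ε/8) / 8) →
        ∀ w ∈ Submodule.span ℝ (u '' {n | n ∈ l}), ∀ t : ℝ,
          (1 - (1/4:ℝ)^(l.length+1)) * ‖w‖ ≤ ‖w + t • v‖ :=
    fun l => guard_exists _ (hFD l) (hθpos l.length) (hθle l.length) (by positivity)
  choose G hG1 hG2 using hG
  have hnext : ∀ l : List ℕ, ∃ n : ℕ, n ∉ bad ∧ n ∉ l ∧
      ∀ f ∈ G l, |u n f| ≤ (1/4:ℝ)^(l.length+1) * (ε/8) / 8 := by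
    intro l
    set δ := (1/4:ℝ)^(l.length+1) * (ε/8) / 8 with hδ
    have hδpos : 0 < δ := by positivity
    have hone : ∀ f ∈ G l, {n | |u n f| ≤ δ} ∈ (Filter.hyperfilter ℕ : Filter ℕ) := by
      intro f hf
      have ht := hp f
      have hev : ∀ᶠ n in (Filter.hyperfilter ℕ : Filter ℕ), dist (f (y n)) (p f) < δ :=
        Metric.tendsto_nhds.mp ht δ hδpos
      show ∀ᶠ n in (Filter.hyperfilter ℕ : Filter ℕ), |u n f| ≤ δ
      filter_upwards [hev] with n hn
      rw [Real.dist_eq] at hn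
      rw [hufn n f]
      linarith
    have hbig : {n | ∀ f ∈ G l, |u n f| ≤ δ} ∈ (Filter.hyperfilter ℕ : Filter ℕ) := by
      have heq : {n | ∀ f ∈ G l, |u n f| ≤ δ} = ⋂ f ∈ G l, {n | |u n f| ≤ δ} := by
        ext n; simp [Set.mem_iInter]
      rw [heq, Filter.biInter_finset_mem]
      exact hone
    obtain ⟨n, hn⟩ : ({n | ∀ f ∈ G l, |u n f| ≤ δ} \ (bad ∪ {n | n ∈ l})).Nonempty := by
      apply Set.Infinite.nonempty
      apply Set.Infinite.diff
      · intro hfin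
        exact (Filter.notMem_hyperfilter_of_finite hfin) (Ultrafilter.mem_coe.mp hbig)
      · exact hbadfin.union l.finite_toSet
    exact ⟨n, fun h => hn.2 (Or.inl h), fun h => hn.2 (Or.inr h), hn.1⟩
  choose next hnext1 hnext2 hnext3 using hnext
  let hist : ℕ → List ℕ := fun k => Nat.rec [] (fun _ l => l ++ [next l]) k
  let σ : ℕ → ℕ := fun k => next (hist k)
  have hist_succ : ∀ k, hist (k+1) = hist k ++ [σ k] := fun k => rfl
  have hist_eq : ∀ k, hist k = (List.range k).map σ := by
    intro k
    induction k with
    | zero => rfl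
    | succ k ih => rw [hist_succ, ih, List.range_succ, List.map_append]; simp
  have hlen : ∀ k, (hist k).length = k := by
    intro k; rw [hist_eq]; simp
  have hmem : ∀ k n, n ∈ hist k ↔ ∃ i < k, σ i = n := by
    intro k n
    rw [hist_eq]
    simp [List.mem_map]
  have hinj : Function.Injective σ := by
    intro i j hij
    by_contra hne
    rcases lt_trichotomy i j with h | h | h
    · have h1 : σ i ∈ hist j := (hmem j (σ i)).mpr ⟨i, h, rfl⟩
      rw [hij] at h1
      exact hnext2 (hist j) h1
    · exact hne h
    · have h1 : σ j ∈ hist i := (hmem i (σ j)).mpr ⟨j, h, rfl⟩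
      rw [← hij] at h1
      exact hnext2 (hist i) h1
  have himg : ∀ k, u '' {n | n ∈ hist k} = (fun i => u (σ i)) '' Set.Iio k := by
    intro k
    ext e
    simp only [Set.mem_image, Set.mem_setOf_eq, hmem, Set.mem_Iio]
    constructor
    · rintro ⟨n, ⟨i, hik, rfl⟩, rfl⟩; exact ⟨i, hik, rfl⟩
    · rintro ⟨i, hik, rfl⟩; exact ⟨σ i, ⟨i, hik, rfl⟩, rfl⟩
  refine ⟨p, σ, hinj, fun k => hbadlow _ (hnext1 (hist k)), ?_⟩
  intro k w hw t
  have hwk : w ∈ Submodule.span ℝ (u '' {n | n ∈ hist k}) := by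
    rw [himg k]
    exact hw
  have h2 := hG2 (hist k) (u (σ k)) (hbadlow _ (hnext1 (hist k))) (by
    intro f hf
    have h3 := hnext3 (hist k) f hf
    exact h3) w hwk t
  rw [hlen k] at h2
  exact h2

end
section
open Filter Topology Set Bornology

variable {X : Type*} [NormedAddCommGroup X] [NormedSpace ℝ X]

set_option maxHeartbeats 2000000 in
lemma core (x : ℕ → X)
    (hb : Bornology.IsBounded (Set.range x))
    (hd : ∀ M : Set ℕ, M.Infinite → Dense (Submodule.span ℝ (x '' M) : Set X))
    (ε : ℝ) (hε : 0 < ε) (g : ℕ → ℕ) (hg : Function.Injective g)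
    (hsep : ∀ i j, i ≠ j → ε ≤ dist (x (g i)) (x (g j))) : False := by
  classical
  obtain ⟨R, hR⟩ := isBounded_iff_forall_norm_le.mp hb
  set y : ℕ → X := fun n => x (g n) with hy
  have hsep' : ∀ i j, i ≠ j → ε ≤ ‖y i - y j‖ := by
    intro i j hij
    have := hsep i j hij
    rwa [dist_eq_norm] at this
  have hRy : ∀ n, ‖y n‖ ≤ R := fun n => hR _ ⟨g n, rfl⟩
  obtain ⟨p, σ, hσinj, hlow, hstep⟩ := core_selection y ε R hε hsep' hRy
  set Jm := (NormedSpace.inclusionInDoubleDualLi ℝ (E := X)) with hJm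
  set v : ℕ → StrongDual ℝ (StrongDual ℝ X) := fun k => Jm (y (σ k)) - p with hv
  set z : ℕ → X := fun k => y (σ k) with hz
  have hJz : ∀ k, Jm (z k) = p + v k := by
    intro k
    rw [hv, hz]
    dsimp only
    rw [add_sub_cancel]
  have hCb : ∀ (s : Finset ℕ) (a : ℕ → ℝ), ∀ j ∈ s, |a j| * (ε/8) ≤ 3 * ‖∑ i ∈ s, a i • v i‖ :=
    coeff_bound v (ε/8) (by positivity) hlow (fun k w hw t => hstep k w hw t)
  have hDL : ∀ (A : Set ℕ) (j : ℕ), j ∉ A →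
      v j ∉ closure (Submodule.span ℝ (v '' A) : Set (StrongDual ℝ (StrongDual ℝ X))) :=
    dist_lemma v (ε/8) (by positivity) hCb
  set Ev : Set ℕ := Set.range (fun m : ℕ => 2 * m) with hEv
  have hEvInf : Ev.Infinite := Set.infinite_range_of_injective (fun a b h => by omega)
  have h1Ev : (1:ℕ) ∉ Ev := by
    rintro ⟨m, hm⟩
    dsimp only at hm
    omega
  have h3Ev : (3:ℕ) ∉ insert 1 Ev := by
    intro h
    rcases Set.mem_insert_iff.mp h with h | ⟨m, hm⟩
    · omega
    · dsimp only at hm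
      omega
  have htrans : ∀ q : X, Jm q ∈
      closure (Submodule.span ℝ ((fun k => Jm (z k)) '' Ev) :
        Set (StrongDual ℝ (StrongDual ℝ X))) := by
    intro q
    have hM : ((g ∘ σ) '' Ev).Infinite :=
      hEvInf.image (Function.Injective.injOn (hg.comp hσinj))
    have hdM := hd _ hM
    have himg : x '' ((g ∘ σ) '' Ev) = z '' Ev := by
      rw [← Set.image_comp]
      rfl
    rw [himg] at hdM
    have hq : q ∈ closure (Submodule.span ℝ (z '' Ev) : Set X) := by
      rw [hdM.closure_eq]
      trivial
    have h2 : Jm q ∈ closure (⇑Jm '' (Submodule.span ℝ (z '' Ev) : Set X)) :=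
      image_closure_subset_closure_image Jm.continuous ⟨q, hq, rfl⟩
    have h3 : ⇑Jm '' (Submodule.span ℝ (z '' Ev) : Set X)
        = (Submodule.span ℝ (⇑Jm '' (z '' Ev)) :
            Set (StrongDual ℝ (StrongDual ℝ X))) := by
      rw [← LinearIsometry.coe_toLinearMap Jm, ← Submodule.map_coe, Submodule.map_span]
    rw [h3] at h2
    have h4 : ⇑Jm '' (z '' Ev) = (fun k => Jm (z k)) '' Ev := by
      rw [← Set.image_comp]
      rfl
    rwa [h4] at h2
  set Vspan := Submodule.span ℝ (v '' Ev) with hVspan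
  by_cases hpV : p ∈ closure (Vspan : Set (StrongDual ℝ (StrongDual ℝ X)))
  · have hpV' : p ∈ Vspan.topologicalClosure := hpV
    have hsub : Submodule.span ℝ ((fun k => Jm (z k)) '' Ev) ≤ Vspan.topologicalClosure := by
      rw [Submodule.span_le]
      rintro e ⟨k, hk, rfl⟩
      show Jm (z k) ∈ Vspan.topologicalClosure
      rw [hJz k]
      exact Submodule.add_mem _ hpV'
        (Submodule.le_topologicalClosure _ (Submodule.subset_span ⟨k, hk, rfl⟩))
    have hcl : closure (Submodule.span ℝ ((fun k => Jm (z k)) '' Ev) :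
        Set (StrongDual ℝ (StrongDual ℝ X))) ⊆ (Vspan.topologicalClosure : Set _) :=
      closure_minimal hsub (Submodule.isClosed_topologicalClosure _)
    have h5 := hcl (htrans (z 1))
    have h5' : p + v 1 ∈ Vspan.topologicalClosure := by
      rw [← hJz 1]
      exact h5
    have h6 : v 1 ∈ Vspan.topologicalClosure := by
      have h7 := Submodule.sub_mem _ h5' hpV'
      have h8 : p + v 1 - p = v 1 := by abel
      rwa [h8] at h7
    exact hDL Ev 1 h1Ev h6
  · have hne : (Vspan : Set (StrongDual ℝ (StrongDual ℝ X))).Nonempty :=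
      ⟨0, Submodule.zero_mem _⟩
    set d0 := Metric.infDist p (Vspan : Set (StrongDual ℝ (StrongDual ℝ X))) with hd0def
    have hd0 : 0 < d0 := by
      rcases lt_or_eq_of_le (Metric.infDist_nonneg (s := (Vspan : Set _)) (x := p)) with h | h
      · exact h
      · exfalso
        exact hpV ((Metric.mem_closure_iff_infDist_zero hne).mpr h.symm)
    have htr1 : p + v 1 ∈ closure (Submodule.span ℝ ((fun k => Jm (z k)) '' Ev) :
        Set (StrongDual ℝ (StrongDual ℝ X))) := by
      rw [← hJz 1]
      exact htrans (z 1)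
    obtain ⟨q, hqmem, hqt⟩ := mem_closure_iff_seq_limit.mp htr1
    have hdec : ∀ m, ∃ c : ℝ, ∃ w ∈ Vspan, q m = c • p + w := by
      intro m
      have hle : Submodule.span ℝ ((fun k => Jm (z k)) '' Ev) ≤ (Submodule.span ℝ {p}) ⊔ Vspan := by
        rw [Submodule.span_le]
        rintro e ⟨k, hk, rfl⟩
        show Jm (z k) ∈ (Submodule.span ℝ {p}) ⊔ Vspan
        rw [hJz k]
        exact Submodule.add_mem _
          (Submodule.mem_sup_left (Submodule.mem_span_singleton_self p))
          (Submodule.mem_sup_right (Submodule.subset_span ⟨k, hk, rfl⟩))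
      have hm := hle (hqmem m)
      obtain ⟨a, ha, w, hw, heq⟩ := Submodule.mem_sup.mp hm
      obtain ⟨c, rfl⟩ := Submodule.mem_span_singleton.mp ha
      exact ⟨c, w, hw, heq.symm⟩
    choose cs ws hws hqeq using hdec
    obtain ⟨B, hBub⟩ := hqt.norm.bddAbove_range
    have hB : ∀ m, ‖q m‖ ≤ B := fun m => hBub ⟨m, rfl⟩
    have hcbnd : ∀ m, cs m ∈ Set.Icc (-(B/d0)) (B/d0) := by
      intro m
      have h7 : |cs m| * d0 ≤ ‖q m‖ := by
        rcases eq_or_ne (cs m) 0 with h0 | h0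
        · rw [h0, abs_zero, zero_mul]
          exact norm_nonneg _
        · have hmem2 : -((cs m)⁻¹ • ws m) ∈ (Vspan : Set _) :=
            Submodule.neg_mem _ (Submodule.smul_mem _ _ (hws m))
          have h8 : d0 ≤ dist p (-((cs m)⁻¹ • ws m)) := Metric.infDist_le_dist_of_mem hmem2
          rw [dist_eq_norm, sub_neg_eq_add] at h8
          have h9 : q m = (cs m) • (p + (cs m)⁻¹ • ws m) := by
            rw [smul_add, smul_smul, mul_inv_cancel₀ h0, one_smul, hqeq m]
          have h10 : ‖q m‖ = |cs m| * ‖p + (cs m)⁻¹ • ws m‖ := by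
            rw [h9, norm_smul, Real.norm_eq_abs]
          rw [h10]
          exact mul_le_mul_of_nonneg_left h8 (abs_nonneg _)
      have h11 : |cs m| ≤ B / d0 := (le_div_iff₀ hd0).mpr (h7.trans (hB m))
      exact Set.mem_Icc.mpr ⟨neg_le_of_abs_le h11, le_of_abs_le h11⟩
    obtain ⟨γ, hγmem, φ, hφ, hφt⟩ :=
      tendsto_subseq_of_bounded (Metric.isBounded_Icc (-(B/d0)) (B/d0)) hcbnd
    have hwt : Filter.Tendsto (fun i => ws (φ i)) Filter.atTop (𝓝 ((p + v 1) - γ • p)) := by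
      have h11 : (fun i => ws (φ i)) = fun i => q (φ i) - cs (φ i) • p := by
        funext i
        rw [hqeq (φ i)]
        abel
      rw [h11]
      exact (hqt.comp hφ.tendsto_atTop).sub (hφt.smul_const p)
    have huu : (p + v 1) - γ • p ∈ closure (Vspan : Set _) :=
      mem_closure_of_tendsto hwt (Filter.Eventually.of_forall (fun i => hws (φ i)))
    by_cases hγ : γ = 1
    · rw [hγ, one_smul] at huu
      have he : (p + v 1) - p = v 1 := by abel
      rw [he] at huu
      exact hDL Ev 1 h1Ev huu
    · set Y := (Submodule.span ℝ (v '' (insert 1 Ev))).topologicalClosure with hY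
      have hVY : Vspan.topologicalClosure ≤ Y :=
        Submodule.topologicalClosure_mono
          (Submodule.span_mono (Set.image_mono (Set.subset_insert _ _)))
      have huuY : (p + v 1) - γ • p ∈ Y := hVY huu
      have hv1Y : v 1 ∈ Y :=
        Submodule.le_topologicalClosure _ (Submodule.subset_span ⟨1, Set.mem_insert _ _, rfl⟩)
      have hpY : p ∈ Y := by
        have h12 : ((p + v 1) - γ • p) - v 1 = (1 - γ) • p := by
          rw [sub_smul, one_smul]
          abel
        have h13 : (1 - γ) • p ∈ Y := h12 ▸ Submodule.sub_mem _ huuY hv1Y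
        have h14 : (1 - γ)⁻¹ • ((1-γ) • p) ∈ Y := Submodule.smul_mem _ _ h13
        rwa [smul_smul, inv_mul_cancel₀ (sub_ne_zero.mpr (Ne.symm hγ)), one_smul] at h14
      have hsub2 : Submodule.span ℝ ((fun k => Jm (z k)) '' Ev) ≤ Y := by
        rw [Submodule.span_le]
        rintro e ⟨k, hk, rfl⟩
        show Jm (z k) ∈ Y
        rw [hJz k]
        exact Submodule.add_mem _ hpY
          (Submodule.le_topologicalClosure _
            (Submodule.subset_span ⟨k, Set.mem_insert_of_mem _ hk, rfl⟩))
      have hcl2 : closure (Submodule.span ℝ ((fun k => Jm (z k)) '' Ev) :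
          Set (StrongDual ℝ (StrongDual ℝ X))) ⊆ (Y : Set _) :=
        closure_minimal hsub2 (Submodule.isClosed_topologicalClosure _)
      have h15 : p + v 3 ∈ Y := by
        rw [← hJz 3]
        exact hcl2 (htrans (z 3))
      have h16 : v 3 ∈ Y := by
        have h17 := Submodule.sub_mem _ h15 hpY
        have h18 : p + v 3 - p = v 3 := by abel
        rwa [h18] at h17
      exact hDL (insert 1 Ev) 3 h3Ev h16

end

section

theorem part1 {X : Type*} [NormedAddCommGroup X] [NormedSpace ℝ X] [CompleteSpace X]
    (x : ℕ → X) (hb : Bornology.IsBounded (Set.range x))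
    (hd : ∀ M : Set ℕ, M.Infinite → Dense (Submodule.span ℝ (x '' M) : Set X)) :
    IsCompact (closure (Set.range x)) := by
  have htb : TotallyBounded (Set.range x) := by
    by_contra h
    obtain ⟨ε, hε, g, hg, hsep⟩ := exists_separated x h
    exact core x hb hd ε hε g hg hsep
  exact TotallyBounded.isCompact_of_isClosed htb.closure isClosed_closure

end


theorem part2 {X : Type*} [NormedAddCommGroup X] [NormedSpace ℝ X] :
    (Cardinal.aleph0 < densityChar X →
      ∀ S : Set X, #S = densityChar X →
        (∀ Λ : Set X, Λ ⊆ S → #Λ = #S → Dense (Submodule.span ℝ Λ : Set X)) →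
        ¬ IsCompact (closure S)) := by
  intro hdc S _hS hyp hK
  have hsep : TopologicalSpace.IsSeparable S :=
    hK.isSeparable.mono subset_closure
  have hspan : TopologicalSpace.IsSeparable (Submodule.span ℝ S : Set X) := hsep.span
  have hdense : Dense (Submodule.span ℝ S : Set X) := hyp S subset_rfl rfl
  have huniv : TopologicalSpace.IsSeparable (Set.univ : Set X) := by
    have := hspan.closure
    rwa [hdense.closure_eq] at this
  have : TopologicalSpace.SeparableSpace X := TopologicalSpace.isSeparable_univ_iff.mp huniv
  obtain ⟨t, htc, htd⟩ := TopologicalSpace.exists_countable_dense X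
  have h1 : densityChar X ≤ #t := csInf_le' ⟨t, htd, rfl⟩
  have h2 : #t ≤ Cardinal.aleph0 := Set.Countable.le_aleph0 htc
  exact absurd ((h1.trans h2).trans_lt hdc) (lt_irrefl _)

theorem stmt_18 {X : Type*} [NormedAddCommGroup X] [NormedSpace ℝ X] [CompleteSpace X] :
    (∀ x : ℕ → X, Bornology.IsBounded (Set.range x) →
      (∀ M : Set ℕ, M.Infinite → Dense (Submodule.span ℝ (x '' M) : Set X)) →
      IsCompact (closure (Set.range x))) ∧
    (Cardinal.aleph0 < densityChar X →
      ∀ S : Set X, #S = densityChar X →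
        (∀ Λ : Set X, Λ ⊆ S → #Λ = #S → Dense (Submodule.span ℝ Λ : Set X)) →
        ¬ IsCompact (closure S)) := by
  exact ⟨fun x hb hd => part1 x hb hd, part2⟩
end

section
/- Let X be a normed space whose completion X̂ strictly contains X (i.e., X is incomplete), let (x_n)_{n<ω} be a normalized linearly dense sequence in X, let y ∈ X̂ ∖ X, and let (y_k)_{k<ω} ⊆ X satisfy ‖y_k − y‖ < 1/k!. Define g_k = y_k + ∑_{n=0}^{k} (n+2)^{−k} x_n ∈ X. Then (g_k)_{k<ω} converges to y in X̂, is bounded and not relatively compact in X, and every subsequence of (g_k) has dense linear span in X; in particular every separable incomplete normed space contains a bounded overcomplete sequence that is not relatively compact. -/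
open Filter Topology UniformSpace Finset

lemma aux_dense_of_dual {X : Type*} [NormedAddCommGroup X] [NormedSpace ℝ X]
    (s : Submodule ℝ X)
    (h : ∀ f : X →L[ℝ] ℝ, (∀ z ∈ s, f z = 0) → f = 0) : Dense (s : Set X) := by
  intro v
  by_contra hv
  obtain ⟨f, u, hfu, hufv⟩ :=
    geometric_hahn_banach_closed_point (s.convex.closure) isClosed_closure hv
  have hu0 : 0 < u := by
    have := hfu 0 (subset_closure s.zero_mem)
    simpa using this
  have hf0 : ∀ z ∈ s, f z = 0 := by
    intro z hz
    by_contra hz0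
    have := hfu (((u + 1) / f z) • z) (subset_closure (s.smul_mem _ hz))
    rw [map_smul, smul_eq_mul, div_mul_cancel₀ _ hz0] at this
    linarith
  have : f = 0 := h f hf0
  rw [this] at hufv
  simp at hufv
  linarith

lemma aux_key {X : Type*} [NormedAddCommGroup X] [NormedSpace ℝ X]
    (x : ℕ → X) (hxnorm : ∀ n, ‖x n‖ = 1)
    (hxdense : Dense (Submodule.span ℝ (Set.range x) : Set X))
    (y : Completion X) (hy : y ∉ Set.range ((↑) : X → Completion X))
    (yk : ℕ → X) (hyk : ∀ k : ℕ, ‖(yk k : Completion X) - y‖ < 1 / (Nat.factorial k))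
    (g : ℕ → X)
    (hg : ∀ k : ℕ, g k = yk k + ∑ n ∈ Finset.range (k + 1), ((((n : ℝ) + 2) ^ k)⁻¹) • x n) :
    Tendsto (fun k => ((g k : Completion X))) atTop (𝓝 y) ∧
      Bornology.IsBounded (Set.range g) ∧
      ¬ IsCompact (closure (Set.range g)) ∧
      ∀ M : Set ℕ, M.Infinite → Dense (Submodule.span ℝ (g '' M) : Set X) := by
  set S : ℕ → X := fun k => ∑ n ∈ Finset.range (k + 1), ((((n : ℝ) + 2) ^ k)⁻¹) • x n with hSdef
  have hSnorm : ∀ k, ‖S k‖ ≤ ((k : ℝ) + 1) * ((2 : ℝ) ^ k)⁻¹ := by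
    intro k
    calc ‖S k‖ ≤ ∑ n ∈ Finset.range (k + 1), ‖((((n : ℝ) + 2) ^ k)⁻¹) • x n‖ :=
          norm_sum_le _ _
      _ ≤ ∑ _n ∈ Finset.range (k + 1), ((2 : ℝ) ^ k)⁻¹ := by
          apply Finset.sum_le_sum
          intro n _
          rw [norm_smul, hxnorm, mul_one, Real.norm_eq_abs, abs_of_nonneg (by positivity)]
          have h2 : (2 : ℝ) ^ k ≤ ((n : ℝ) + 2) ^ k := by
            apply pow_le_pow_left₀ (by norm_num)
            have : (0 : ℝ) ≤ (n : ℝ) := Nat.cast_nonneg n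
            linarith
          exact inv_anti₀ (by positivity) h2
      _ = ((k : ℝ) + 1) * ((2 : ℝ) ^ k)⁻¹ := by
          rw [Finset.sum_const, Finset.card_range, nsmul_eq_mul]
          push_cast; ring
  have hSbound1 : ∀ k : ℕ, ((k : ℝ) + 1) * ((2 : ℝ) ^ k)⁻¹ ≤ 1 := by
    intro k
    have hk : (k : ℝ) + 1 ≤ 2 ^ k := by
      exact_mod_cast Nat.succ_le_of_lt (Nat.lt_two_pow_self (n := k))
    have h2k : (0 : ℝ) < 2 ^ k := by positivity
    calc ((k : ℝ) + 1) * ((2 : ℝ) ^ k)⁻¹ ≤ (2 : ℝ) ^ k * ((2 : ℝ) ^ k)⁻¹ := by gcongr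
      _ = 1 := mul_inv_cancel₀ h2k.ne'
  have htendS : Tendsto (fun k : ℕ => ((k : ℝ) + 1) * ((2 : ℝ) ^ k)⁻¹) atTop (𝓝 0) := by
    have ha := tendsto_self_mul_const_pow_of_lt_one (r := 1 / 2) (by norm_num) (by norm_num)
    have hb := tendsto_pow_atTop_nhds_zero_of_lt_one (r := (1 : ℝ) / 2) (by norm_num) (by norm_num)
    have hab := ha.add hb
    rw [add_zero] at hab
    have heq : (fun k : ℕ => ((k : ℝ) + 1) * ((2 : ℝ) ^ k)⁻¹) =
        fun k : ℕ => (k : ℝ) * ((1 : ℝ) / 2) ^ k + ((1 : ℝ) / 2) ^ k := by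
      funext k
      rw [one_div, inv_pow]
      ring
    rw [heq]
    exact hab
  have hfact : ∀ k : ℕ, (0 : ℝ) < (Nat.factorial k : ℝ) := fun k => by
    exact_mod_cast Nat.factorial_pos k
  have hfact1 : ∀ k : ℕ, (1 : ℝ) / (Nat.factorial k : ℝ) ≤ 1 := fun k => by
    rw [div_le_one (hfact k)]
    exact_mod_cast Nat.one_le_iff_ne_zero.mpr (Nat.factorial_pos k).ne'
  have htendfact : Tendsto (fun k : ℕ => (1 : ℝ) / (Nat.factorial k : ℝ)) atTop (𝓝 0) := by
    have := FloorSemiring.tendsto_pow_div_factorial_atTop (K := ℝ) 1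
    simpa [one_pow] using this
  have hgdecomp : ∀ k : ℕ, ((g k : Completion X)) - y =
      ((yk k : Completion X) - y) + ((S k : X) : Completion X) := by
    intro k
    rw [hg k, Completion.coe_add]
    abel
  -- Tendsto
  have hconv : Tendsto (fun k => ((g k : Completion X))) atTop (𝓝 y) := by
    rw [tendsto_iff_norm_sub_tendsto_zero]
    apply squeeze_zero (g := fun k : ℕ =>
        (1 : ℝ) / (Nat.factorial k : ℝ) + ((k : ℝ) + 1) * ((2 : ℝ) ^ k)⁻¹)
      (fun k => norm_nonneg _)
    · intro k
      rw [hgdecomp k]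
      refine (norm_add_le _ _).trans ?_
      have h1 : ‖(yk k : Completion X) - y‖ ≤ 1 / (Nat.factorial k : ℝ) := (hyk k).le
      have h2 : ‖((S k : X) : Completion X)‖ ≤ ((k : ℝ) + 1) * ((2 : ℝ) ^ k)⁻¹ := by
        rw [Completion.norm_coe]; exact hSnorm k
      linarith
    · simpa using htendfact.add htendS
  refine ⟨hconv, ?_, ?_, ?_⟩
  -- Bounded
  · rw [isBounded_iff_forall_norm_le]
    refine ⟨‖y‖ + 2, ?_⟩
    rintro _ ⟨k, rfl⟩
    rw [← Completion.norm_coe]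
    have e1 : ((g k : Completion X)) = (((yk k : Completion X) - y)
        + ((S k : X) : Completion X)) + y := by
      rw [hg k, Completion.coe_add]; abel
    rw [e1]
    refine (norm_add_le _ _).trans ?_
    refine le_trans (add_le_add_left (norm_add_le _ _) _) ?_
    have a1 : ‖(yk k : Completion X) - y‖ ≤ 1 := (hyk k).le.trans (hfact1 k)
    have a2 : ‖((S k : X) : Completion X)‖ ≤ 1 := by
      rw [Completion.norm_coe]; exact (hSnorm k).trans (hSbound1 k)
    linarith
  -- Not compact
  · intro hcomp
    obtain ⟨a, -, φ, hφ, hlim⟩ :=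
      hcomp.tendsto_subseq (fun k => subset_closure (Set.mem_range_self (f := g) k))
    have h1 : Tendsto (fun i => ((g (φ i) : Completion X))) atTop (𝓝 (a : Completion X)) :=
      ((Completion.continuous_coe X).tendsto a).comp hlim
    have h2 : Tendsto (fun i => ((g (φ i) : Completion X))) atTop (𝓝 y) :=
      hconv.comp hφ.tendsto_atTop
    exact hy ⟨a, tendsto_nhds_unique h1 h2⟩
  -- Overcomplete
  · intro M hM
    apply aux_dense_of_dual
    intro f hf0
    have hfg : ∀ k ∈ M, f (g k) = 0 := fun k hk =>
      hf0 _ (Submodule.subset_span ⟨k, hk, rfl⟩)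
    have hMinf : {n | n ∈ M}.Infinite := hM
    set φ : ℕ → ℕ := Nat.nth (· ∈ M) with hφdef
    have hφmono : StrictMono φ := Nat.nth_strictMono hMinf
    have hφmem : ∀ i, φ i ∈ M := fun i => Nat.nth_mem_of_infinite hMinf i
    -- extension of f to the completion
    have hdr : DenseRange ((Completion.toComplL : X →L[ℝ] Completion X)) := by
      rw [Completion.coe_toComplL]
      exact Completion.denseRange_coe
    have hui : IsUniformInducing ((Completion.toComplL : X →L[ℝ] Completion X)) := by
      rw [show ⇑(Completion.toComplL : X →L[ℝ] Completion X) = ((↑) : X → Completion X) from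
        Completion.coe_toComplL]
      exact (Completion.isUniformEmbedding_coe X).isUniformInducing
    set F : Completion X →L[ℝ] ℝ := f.extend Completion.toComplL with hFdef
    have hFcoe : ∀ z : X, F ((z : X) : Completion X) = f z := by
      intro z
      have := ContinuousLinearMap.extend_eq f hdr hui z
      rwa [show (Completion.toComplL : X →L[ℝ] Completion X) z = ((z : X) : Completion X) from
        congrFun Completion.coe_toComplL z] at this
    have hFy : F y = 0 := by
      have h1 : Tendsto (fun i => F ((g (φ i) : Completion X))) atTop (𝓝 (F y)) :=
        (F.continuous.tendsto y).comp (hconv.comp hφmono.tendsto_atTop)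
      have h2 : (fun i => F ((g (φ i) : Completion X))) = fun _ => (0 : ℝ) := by
        funext i
        rw [hFcoe]
        exact hfg _ (hφmem i)
      rw [h2] at h1
      exact tendsto_nhds_unique h1 tendsto_const_nhds
    have hfyk : ∀ k : ℕ, |f (yk k)| ≤ ‖F‖ * (1 / (Nat.factorial k : ℝ)) := by
      intro k
      have he : f (yk k) = F ((yk k : Completion X) - y) := by
        rw [map_sub, hFy, hFcoe, sub_zero]
      rw [he, ← Real.norm_eq_abs]
      exact (F.le_opNorm _).trans
        (mul_le_mul_of_nonneg_left (hyk k).le (norm_nonneg F))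
    -- f vanishes on all x j
    have hx0 : ∀ j, f (x j) = 0 := by
      intro j
      induction j using Nat.strong_induction_on with
      | _ j ih =>
        have key : ∀ k ∈ M, j ≤ k → |f (x j)| ≤
            ‖F‖ * (((j : ℝ) + 2) ^ k / (Nat.factorial k : ℝ)) +
              ‖f‖ * ((k : ℝ) * (((j : ℝ) + 2) / ((j : ℝ) + 3)) ^ k) := by
          intro k hk hjk
          have h0 : f (g k) = 0 := hfg k hk
          rw [hg k, map_add, map_sum] at h0
          simp only [map_smul, smul_eq_mul] at h0
          have hsplit : ∑ n ∈ Finset.range (k + 1), ((((n : ℝ) + 2) ^ k)⁻¹ * f (x n)) =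
              (((j : ℝ) + 2) ^ k)⁻¹ * f (x j) +
                ∑ n ∈ Finset.Ico (j + 1) (k + 1), ((((n : ℝ) + 2) ^ k)⁻¹ * f (x n)) := by
            rw [Finset.range_eq_Ico,
              ← Finset.sum_Ico_consecutive _ (Nat.zero_le j) (by omega : j ≤ k + 1)]
            have hz : ∑ n ∈ Finset.Ico 0 j, ((((n : ℝ) + 2) ^ k)⁻¹ * f (x n)) = 0 :=
              Finset.sum_eq_zero fun n hn => by
                rw [ih n (Finset.mem_Ico.1 hn).2, mul_zero]
            rw [hz, zero_add, Finset.sum_eq_sum_Ico_succ_bot (by omega : j < k + 1)]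
          rw [hsplit] at h0
          have heq : (((j : ℝ) + 2) ^ k)⁻¹ * f (x j) =
              -(f (yk k) + ∑ n ∈ Finset.Ico (j + 1) (k + 1),
                ((((n : ℝ) + 2) ^ k)⁻¹ * f (x n))) := by
            linarith
          have hsum_bound : |∑ n ∈ Finset.Ico (j + 1) (k + 1),
              ((((n : ℝ) + 2) ^ k)⁻¹ * f (x n))| ≤ (k : ℝ) * ((((j : ℝ) + 3) ^ k)⁻¹ * ‖f‖) := by
            calc |∑ n ∈ Finset.Ico (j + 1) (k + 1), ((((n : ℝ) + 2) ^ k)⁻¹ * f (x n))|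
                ≤ ∑ n ∈ Finset.Ico (j + 1) (k + 1), |(((n : ℝ) + 2) ^ k)⁻¹ * f (x n)| :=
                  Finset.abs_sum_le_sum_abs _ _
              _ ≤ ∑ _n ∈ Finset.Ico (j + 1) (k + 1), ((((j : ℝ) + 3) ^ k)⁻¹ * ‖f‖) := by
                  apply Finset.sum_le_sum
                  intro n hn
                  have hn' : j + 1 ≤ n := (Finset.mem_Ico.1 hn).1
                  rw [abs_mul, abs_of_nonneg (by positivity)]
                  have hb1 : (((n : ℝ) + 2) ^ k)⁻¹ ≤ (((j : ℝ) + 3) ^ k)⁻¹ := by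
                    apply inv_anti₀ (by positivity)
                    apply pow_le_pow_left₀ (by positivity)
                    have : (j : ℝ) + 1 ≤ (n : ℝ) := by exact_mod_cast hn'
                    linarith
                  have hb2 : |f (x n)| ≤ ‖f‖ := by
                    rw [← Real.norm_eq_abs]
                    calc ‖f (x n)‖ ≤ ‖f‖ * ‖x n‖ := f.le_opNorm _
                      _ = ‖f‖ := by rw [hxnorm, mul_one]
                  exact mul_le_mul hb1 hb2 (abs_nonneg _) (by positivity)
              _ = ((k + 1 : ℕ) - (j + 1 : ℕ) : ℕ) * ((((j : ℝ) + 3) ^ k)⁻¹ * ‖f‖) := by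
                  rw [Finset.sum_const, Nat.card_Ico, nsmul_eq_mul]
              _ ≤ (k : ℝ) * ((((j : ℝ) + 3) ^ k)⁻¹ * ‖f‖) := by
                  apply mul_le_mul_of_nonneg_right _ (by positivity)
                  exact_mod_cast Nat.sub_le_iff_le_add.mpr (by omega)
          have habs : (((j : ℝ) + 2) ^ k)⁻¹ * |f (x j)| ≤
              ‖F‖ * (1 / (Nat.factorial k : ℝ)) + (k : ℝ) * ((((j : ℝ) + 3) ^ k)⁻¹ * ‖f‖) := by
            have h1 : |(((j : ℝ) + 2) ^ k)⁻¹ * f (x j)| ≤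
                |f (yk k)| + |∑ n ∈ Finset.Ico (j + 1) (k + 1),
                  ((((n : ℝ) + 2) ^ k)⁻¹ * f (x n))| := by
              rw [heq, abs_neg]
              exact abs_add_le _ _
            rw [abs_mul, abs_of_nonneg (by positivity : (0:ℝ) ≤ (((j : ℝ) + 2) ^ k)⁻¹)] at h1
            exact h1.trans (add_le_add (hfyk k) hsum_bound)
          have hpow : (0 : ℝ) < ((j : ℝ) + 2) ^ k := by positivity
          rw [inv_mul_le_iff₀ hpow] at habs
          refine habs.trans (le_of_eq ?_)
          have hpow3 : (((j : ℝ) + 3) ^ k) ≠ 0 := by positivity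
          rw [div_pow]
          field_simp
        -- take the limit along φ
        have t1 : Tendsto (fun k : ℕ => ‖F‖ * (((j : ℝ) + 2) ^ k / (Nat.factorial k : ℝ)) +
            ‖f‖ * ((k : ℝ) * (((j : ℝ) + 2) / ((j : ℝ) + 3)) ^ k)) atTop (𝓝 0) := by
          have ta := (FloorSemiring.tendsto_pow_div_factorial_atTop (K := ℝ)
            ((j : ℝ) + 2)).const_mul ‖F‖
          have htb : (0:ℝ) ≤ ((j : ℝ) + 2) / ((j : ℝ) + 3) := by positivity
          have htb2 : ((j : ℝ) + 2) / ((j : ℝ) + 3) < 1 := by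
            rw [div_lt_one (by positivity)]
            linarith
          have tb := (tendsto_self_mul_const_pow_of_lt_one htb htb2).const_mul ‖f‖
          simpa using ta.add tb
        have hlim : Tendsto (fun i : ℕ => ‖F‖ * (((j : ℝ) + 2) ^ (φ i) /
            (Nat.factorial (φ i) : ℝ)) +
            ‖f‖ * (((φ i) : ℝ) * (((j : ℝ) + 2) / ((j : ℝ) + 3)) ^ (φ i))) atTop (𝓝 0) :=
          t1.comp hφmono.tendsto_atTop
        have hev : ∀ᶠ i in atTop, |f (x j)| ≤ ‖F‖ * (((j : ℝ) + 2) ^ (φ i) /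
            (Nat.factorial (φ i) : ℝ)) +
            ‖f‖ * (((φ i) : ℝ) * (((j : ℝ) + 2) / ((j : ℝ) + 3)) ^ (φ i)) := by
          rw [eventually_atTop]
          exact ⟨j, fun i hi => key (φ i) (hφmem i) (hi.trans (hφmono.le_apply))⟩
        have hle : |f (x j)| ≤ 0 := ge_of_tendsto hlim hev
        exact abs_eq_zero.1 (le_antisymm hle (abs_nonneg _))
    -- conclude f = 0
    have hker : ∀ v ∈ Submodule.span ℝ (Set.range x), f v = 0 := by
      intro v hv
      have hle : Submodule.span ℝ (Set.range x) ≤ LinearMap.ker (f : X →ₗ[ℝ] ℝ) := by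
        rw [Submodule.span_le]
        rintro _ ⟨n, rfl⟩
        exact hx0 n
      exact hle hv
    have : (⇑f : X → ℝ) = ⇑(0 : X →L[ℝ] ℝ) := by
      apply Continuous.ext_on hxdense f.continuous continuous_const
      intro v hv
      exact hker v hv
    ext v
    exact congrFun this v

theorem stmt_19 {X : Type*} [NormedAddCommGroup X] [NormedSpace ℝ X]
    (hinc : ¬ Function.Surjective ((↑) : X → Completion X))
    (x : ℕ → X) (hxnorm : ∀ n, ‖x n‖ = 1)
    (hxdense : Dense (Submodule.span ℝ (Set.range x) : Set X))
    (y : Completion X) (hy : y ∉ Set.range ((↑) : X → Completion X))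
    (yk : ℕ → X) (hyk : ∀ k : ℕ, ‖(yk k : Completion X) - y‖ < 1 / (Nat.factorial k))
    (g : ℕ → X)
    (hg : ∀ k : ℕ, g k = yk k + ∑ n ∈ Finset.range (k + 1), ((((n : ℝ) + 2) ^ k)⁻¹) • x n) :
    (Tendsto (fun k => ((g k : Completion X))) atTop (𝓝 y) ∧
      Bornology.IsBounded (Set.range g) ∧
      ¬ IsCompact (closure (Set.range g)) ∧
      ∀ M : Set ℕ, M.Infinite → Dense (Submodule.span ℝ (g '' M) : Set X)) ∧
    (∀ (Z : Type) [NormedAddCommGroup Z] [NormedSpace ℝ Z],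
      TopologicalSpace.SeparableSpace Z → ¬ CompleteSpace Z →
      ∃ g' : ℕ → Z, Bornology.IsBounded (Set.range g') ∧
        (∀ M : Set ℕ, M.Infinite → Dense (Submodule.span ℝ (g' '' M) : Set Z)) ∧
        ¬ IsCompact (closure (Set.range g'))) := by
  refine ⟨aux_key x hxnorm hxdense y hy yk hyk g hg, ?_⟩
  intro Z _ _ hsep hcomp
  classical
  haveI := hsep
  have hnt : Nontrivial Z := by
    by_contra h
    rw [not_nontrivial_iff_subsingleton] at h
    haveI : Finite Z := Finite.of_subsingleton
    exact hcomp inferInstance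
  haveI : Nonempty Z := ⟨0⟩
  obtain ⟨d, hd⟩ := TopologicalSpace.exists_dense_seq Z
  obtain ⟨e, he⟩ := exists_ne (0 : Z)
  set x' : ℕ → Z := fun n => if d n = 0 then ‖e‖⁻¹ • e else ‖d n‖⁻¹ • d n with hx'def
  have hx'norm : ∀ n, ‖x' n‖ = 1 := by
    intro n
    by_cases h : d n = 0
    · simp only [hx'def, if_pos h]
      exact norm_smul_inv_norm he
    · simp only [hx'def, if_neg h]
      exact norm_smul_inv_norm h
  have hx'dense : Dense (Submodule.span ℝ (Set.range x') : Set Z) := by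
    apply hd.mono
    rintro _ ⟨n, rfl⟩
    by_cases h : d n = 0
    · rw [h]
      exact (Submodule.span ℝ (Set.range x')).zero_mem
    · have : d n = ‖d n‖ • x' n := by
        rw [hx'def]
        simp only [if_neg h]
        rw [smul_smul, mul_inv_cancel₀ (norm_ne_zero_iff.2 h), one_smul]
      rw [this]
      exact Submodule.smul_mem _ _ (Submodule.subset_span ⟨n, rfl⟩)
  have hsurj : ¬ Function.Surjective ((↑) : Z → Completion Z) := by
    intro hs
    apply hcomp
    refine (completeSpace_iff_isComplete_range
      (Completion.isUniformEmbedding_coe Z).isUniformInducing).2 ?_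
    rw [Set.range_eq_univ.2 hs]
    exact complete_univ
  rw [Function.Surjective] at hsurj
  push_neg at hsurj
  obtain ⟨y', hy'⟩ := hsurj
  have hy'' : y' ∉ Set.range ((↑) : Z → Completion Z) := by
    rintro ⟨z, hz⟩
    exact hy' z hz
  have hchoice : ∀ k : ℕ, ∃ z : Z, ‖(z : Completion Z) - y'‖ < 1 / (Nat.factorial k : ℝ) := by
    intro k
    have hpos : (0 : ℝ) < 1 / (Nat.factorial k : ℝ) := by positivity
    obtain ⟨z, hz⟩ := Metric.denseRange_iff.1 Completion.denseRange_coe y' _ hpos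
    exact ⟨z, by rwa [← dist_eq_norm, dist_comm]⟩
  choose yk' hyk' using hchoice
  set g' : ℕ → Z := fun k => yk' k +
    ∑ n ∈ Finset.range (k + 1), ((((n : ℝ) + 2) ^ k)⁻¹) • x' n with hg'def
  obtain ⟨-, hb, hnc, hdense⟩ := aux_key x' hx'norm hx'dense y' hy'' yk' hyk' g' (fun _ => rfl)
  exact ⟨g', hb, hdense, hnc⟩
end
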